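/- arXiv:math/0104210 — 2 statements merged into one kernel-verified Lean document; each statement's English description precedes it below -/
import Mathlib

section
/- The fan Σ_W is a smooth complete fan in ℤ^4 with G(Σ_W) = {e_0, …, e_6}, whose primitive collections are exactly {e_2, e_3, e_4}, {e_1, e_2, e_3}, {e_1, e_6}, {e_0, e_4, e_5}, {e_0, e_5, e_6}, with primitive relations e_2+e_3+e_4 = e_6, e_1+e_2+e_3 = e_5, e_1+e_6 = e_4+e_5, e_0+e_4+e_5 = 0, e_0+e_5+e_6 = e_2+e_3. In particular, the primitive collection {e_1, e_6} has degree 0, so Σ_W is not Fano. -/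
/-! ## Basic setup: cones and smooth complete fans in `ℤ^n` with ambient space `ℚ^n` -/

/-- The ambient rational vector space `ℚ^n`. -/
abbrev Vec (n : ℕ) := Fin n → ℚ

/-- The lattice `ℤ^n`. -/
abbrev LVec (n : ℕ) := Fin n → ℤ

/-- The natural inclusion `ℤ^n → ℚ^n`. -/
def toQ {n : ℕ} (v : LVec n) : Vec n := fun i => (v i : ℚ)

/-- The cone generated by a set `S ⊆ ℚ^n`: all nonnegative rational linear
combinations of elements of `S`. -/
def coneGen {n : ℕ} (S : Set (Vec n)) : Set (Vec n) :=
  {x | ∃ (T : Finset (Vec n)) (c : Vec n → ℚ),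
    ↑T ⊆ S ∧ (∀ s, 0 ≤ c s) ∧ x = ∑ s ∈ T, c s • s}

/-- `G` is a face of the cone `σ`: it is cut out on `σ` by a linear form
which is nonnegative on `σ`. -/
def IsFaceOf {n : ℕ} (G σ : Set (Vec n)) : Prop :=
  ∃ u : Vec n →ₗ[ℚ] ℚ, (∀ x ∈ σ, 0 ≤ u x) ∧ G = {x ∈ σ | u x = 0}

/-- A smooth complete fan in `ℤ^n`: a finite collection of cones in `ℚ^n`, each
generated by (the images of) a subset of some `ℤ`-basis of `ℤ^n`, closed under
taking faces, such that the intersection of two cones is a face of each, and whose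
union is all of `ℚ^n`. -/
structure IsSmoothCompleteFan {n : ℕ} (F : Set (Set (Vec n))) : Prop where
  finite : F.Finite
  smooth : ∀ σ ∈ F, ∃ (b : Module.Basis (Fin n) ℤ (LVec n)) (I : Finset (Fin n)),
    σ = coneGen (toQ '' (⇑b '' ↑I))
  faces : ∀ σ ∈ F, ∀ G, IsFaceOf G σ → G ∈ F
  inter : ∀ σ ∈ F, ∀ τ ∈ F, IsFaceOf (σ ∩ τ) σ ∧ IsFaceOf (σ ∩ τ) τ
  covers : ⋃₀ F = Set.univ

/-- A primitive lattice vector. -/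
def IsPrimitive {n : ℕ} (v : LVec n) : Prop :=
  v ≠ 0 ∧ ∀ (k : ℤ) (w : LVec n), v = k • w → IsUnit k

/-- `G(Σ)`: the set of primitive lattice generators of the rays of the fan. -/
def gens {n : ℕ} (F : Set (Set (Vec n))) : Set (LVec n) :=
  {v | IsPrimitive v ∧ coneGen {toQ v} ∈ F}

/-- A primitive collection of the fan `F`: a set `P` of ray generators such that
`P` does not generate a cone of `F`, but every proper subset obtained by removing
one element does. -/
def IsPrimCol {n : ℕ} (F : Set (Set (Vec n))) (P : Finset (LVec n)) : Prop :=
  ↑P ⊆ gens F ∧ coneGen (toQ '' ↑P) ∉ F ∧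
    ∀ x ∈ P, coneGen (toQ '' ↑(P.erase x)) ∈ F

/-- `HasPrimRel F P Y a` : the sum of the elements of `P` lies in the relative
interior of the cone of `F` generated by `Y`, with (positive integral) coordinates
`a y` on the generators `y ∈ Y`; i.e. the primitive relation of `P` is
`∑_{x ∈ P} x = ∑_{y ∈ Y} a y • y`. -/
def HasPrimRel {n : ℕ} (F : Set (Set (Vec n))) (P Y : Finset (LVec n))
    (a : LVec n → ℤ) : Prop :=
  ↑Y ⊆ gens F ∧ coneGen (toQ '' ↑Y) ∈ F ∧ (∀ y ∈ Y, 0 < a y) ∧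
    ∑ x ∈ P, x = ∑ y ∈ Y, a y • y

/-- The degree of a primitive collection `P` with primitive relation data `(Y, a)`:
`deg P = |P| - ∑ a_y`. -/
def degOf {n : ℕ} (P Y : Finset (LVec n)) (a : LVec n → ℤ) : ℤ :=
  (P.card : ℤ) - ∑ y ∈ Y, a y

/-- A fan is Fano if every primitive collection has strictly positive degree
(Batyrev's criterion). -/
def IsFano {n : ℕ} (F : Set (Set (Vec n))) : Prop :=
  ∀ P Y a, IsPrimCol F P → HasPrimRel F P Y a → 0 < degOf P Y a

/-- The star subdivision of the fan `F` at the cone generated by `T`, with new ray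
generated by `x = ∑_{t ∈ T} t`: its cones are the cones of `F` not containing the
cone of `T`, together with the cones generated by `{x} ∪ A` where `A` runs over the
generator sets of those faces, not containing the cone of `T`, of the cones of `F`
containing the cone of `T`. -/
def starSubdiv {n : ℕ} (F : Set (Set (Vec n))) (T : Finset (LVec n)) :
    Set (Set (Vec n)) :=
  {σ ∈ F | ¬ coneGen (toQ '' ↑T) ⊆ σ} ∪
  {ρ | ∃ A : Finset (LVec n), ↑A ⊆ gens F ∧
      (∃ σ ∈ F, coneGen (toQ '' ↑T) ⊆ σ ∧ IsFaceOf (coneGen (toQ '' (↑A : Set (LVec n)))) σ) ∧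
      ¬ coneGen (toQ '' ↑T) ⊆ coneGen (toQ '' (↑A : Set (LVec n))) ∧
      ρ = coneGen (toQ '' ↑(insert (∑ t ∈ T, t) A : Finset (LVec n)))}

/-- `F'` is obtained from `F` by a star subdivision at a cone of `F` of dimension
at least `2` (equivalently, the associated toric morphism is a blow-up along a
smooth invariant center). -/
def IsBlowup {n : ℕ} (F' F : Set (Set (Vec n))) : Prop :=
  ∃ T : Finset (LVec n), ↑T ⊆ gens F ∧ 2 ≤ T.card ∧
    coneGen (toQ '' ↑T) ∈ F ∧ F' = starSubdiv F T

/-- The fan `F'` refines the fan `F`: every cone of `F'` is contained in a cone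
of `F`. -/
def Refines {n : ℕ} (F' F : Set (Set (Vec n))) : Prop :=
  ∀ σ' ∈ F', ∃ σ ∈ F, σ' ⊆ σ


/-! ## The explicit construction in `ℤ^4` -/

/-- `e₁`, first standard basis vector of `ℤ^4`. -/
def e1 : LVec 4 := ![1, 0, 0, 0]
/-- `e₂`. -/
def e2 : LVec 4 := ![0, 1, 0, 0]
/-- `e₃`. -/
def e3 : LVec 4 := ![0, 0, 1, 0]
/-- `e₄`. -/
def e4 : LVec 4 := ![0, 0, 0, 1]
/-- `e₀ = -e₁ - e₂ - e₃ - e₄`. -/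
def e0 : LVec 4 := ![-1, -1, -1, -1]
/-- `e₅ = e₁ + e₂ + e₃`. -/
def e5 : LVec 4 := ![1, 1, 1, 0]
/-- `e₆ = e₂ + e₃ + e₄`. -/
def e6 : LVec 4 := ![0, 1, 1, 1]
/-- `e₇ = e₄ + e₅`. -/
def e7 : LVec 4 := ![1, 1, 1, 1]

/-- The fan of `ℙ^4`: its cones are generated by the proper subsets of
`{e₀, e₁, e₂, e₃, e₄}`. -/
def SigmaP4 : Set (Set (Vec 4)) :=
  {σ | ∃ S : Finset (LVec 4), S ⊂ ({e0, e1, e2, e3, e4} : Finset (LVec 4)) ∧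
    σ = coneGen (toQ '' ↑S)}

/-- `Σ_X`: the fan of `ℙ^4` blown up along the line `V(⟨e₁,e₂,e₃⟩)`, i.e. the star
subdivision of `Σ_{ℙ^4}` at the cone generated by `{e₁,e₂,e₃}`, with new ray
`e₅ = e₁ + e₂ + e₃`. -/
def SigmaX : Set (Set (Vec 4)) := starSubdiv SigmaP4 {e1, e2, e3}

/-- `Σ_W`: the star subdivision of `Σ_X` at the cone generated by `{e₂,e₃,e₄}`,
with new ray `e₆ = e₂ + e₃ + e₄`. -/
def SigmaW : Set (Set (Vec 4)) := starSubdiv SigmaX {e2, e3, e4}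

/-- `Σ_Y`: the star subdivision of `Σ_W` at the cone generated by `{e₄,e₅}`,
with new ray `e₇ = e₄ + e₅`. -/
def SigmaY : Set (Set (Vec 4)) := starSubdiv SigmaW {e4, e5}


namespace Aux
open Finset
open scoped Classical

/-- cone generated by a finite set of lattice vectors -/
def cn (B : Finset (LVec 4)) : Set (Vec 4) := coneGen (toQ '' (B : Set (LVec 4)))

lemma cn_def (B : Finset (LVec 4)) : coneGen (toQ '' (B : Set (LVec 4))) = cn B := rfl

lemma toQ_inj : Function.Injective (toQ (n := 4)) := by
  intro a b h
  funext i
  have h2 : ((a i : ℚ)) = ((b i : ℚ)) := congrFun h i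
  exact_mod_cast h2

/-- integer dot product -/
def idot (w v : LVec 4) : ℤ := ∑ i, w i * v i

/-- rational dot product as a linear map -/
def dotL (w : LVec 4) : Vec 4 →ₗ[ℚ] ℚ := ∑ i, (w i : ℚ) • LinearMap.proj i

lemma dotL_apply (w : LVec 4) (x : Vec 4) : dotL w x = ∑ i, (w i : ℚ) * x i := by
  simp [dotL, smul_eq_mul]

lemma dotL_toQ (w v : LVec 4) : dotL w (toQ v) = (idot w v : ℚ) := by
  simp [dotL_apply, idot, toQ]

lemma mem_cn_iff {S : Finset (LVec 4)} {x : Vec 4} :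
    x ∈ cn S ↔
      ∃ c : LVec 4 → ℚ, (∀ s, 0 ≤ c s) ∧ x = ∑ s ∈ S, c s • toQ s := by
  constructor
  · rintro ⟨T, c, hTS, hc, rfl⟩
    refine ⟨fun s => if toQ s ∈ T then c (toQ s) else 0, ?_, ?_⟩
    · intro s
      by_cases h : toQ s ∈ T <;> simp [h, hc]
    · have h1 : ∑ s ∈ S, (if toQ s ∈ T then c (toQ s) else 0) • toQ s
          = ∑ y ∈ S.image toQ, (if y ∈ T then c y else 0) • y := by
        rw [Finset.sum_image (fun a _ b _ h => toQ_inj h)]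
      rw [h1]
      have hsub : T ⊆ S.image toQ := by
        intro y hy
        have := hTS hy
        rw [← Finset.coe_image] at this
        exact this
      rw [← Finset.sum_subset hsub]
      · apply Finset.sum_congr rfl
        intro y hy; simp [hy]
      · intro y _ hy; simp [hy]
  · rintro ⟨c, hc, rfl⟩
    refine ⟨S.image toQ, fun y => c (Function.invFun toQ y), ?_, fun y => hc _, ?_⟩
    · rw [Finset.coe_image]
    · rw [Finset.sum_image (fun a _ b _ h => toQ_inj h)]
      apply Finset.sum_congr rfl
      intro s _
      have h2 : Function.invFun toQ (toQ s) = s := Function.leftInverse_invFun toQ_inj s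
      show c s • toQ s = c (Function.invFun toQ (toQ s)) • toQ s
      rw [h2]

lemma subset_coneGen (S : Set (Vec 4)) : S ⊆ coneGen S := by
  intro x hx
  exact ⟨{x}, fun y => 1, by simpa using hx, fun _ => zero_le_one, by simp⟩

lemma mem_cn_self {S : Finset (LVec 4)} {s : LVec 4} (hs : s ∈ S) : toQ s ∈ cn S :=
  subset_coneGen _ ⟨s, hs, rfl⟩

lemma coneGen_mono {S S' : Set (Vec 4)} (h : S ⊆ S') : coneGen S ⊆ coneGen S' := by
  rintro x ⟨T, c, hTS, hc, rfl⟩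
  exact ⟨T, c, fun y hy => h (hTS hy), hc, rfl⟩

lemma zero_mem_coneGen (S : Set (Vec 4)) : (0 : Vec 4) ∈ coneGen S :=
  ⟨∅, fun _ => 0, by simp, fun _ => le_refl 0, by simp⟩

/-- normalized representation: coefficients vanish outside T -/
lemma coneGen_norm {S : Set (Vec 4)} {x : Vec 4} (hx : x ∈ coneGen S) :
    ∃ (T : Finset (Vec 4)) (c : Vec 4 → ℚ), ↑T ⊆ S ∧ (∀ s, 0 ≤ c s) ∧
      (∀ y, y ∉ T → c y = 0) ∧ x = ∑ s ∈ T, c s • s := by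
  classical
  obtain ⟨T, c, hTS, hc, rfl⟩ := hx
  refine ⟨T, fun y => if y ∈ T then c y else 0, hTS, ?_, ?_, ?_⟩
  · intro s
    by_cases h : s ∈ T <;> simp [h, hc]
  · intro y hy; simp [hy]
  · apply Finset.sum_congr rfl
    intro y hy; simp [hy]

lemma add_mem_coneGen {S : Set (Vec 4)} {x y : Vec 4}
    (hx : x ∈ coneGen S) (hy : y ∈ coneGen S) : x + y ∈ coneGen S := by
  obtain ⟨T1, c1, hT1, hc1, hz1, rfl⟩ := coneGen_norm hx
  obtain ⟨T2, c2, hT2, hc2, hz2, rfl⟩ := coneGen_norm hy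
  refine ⟨T1 ∪ T2, fun s => c1 s + c2 s, ?_, fun s => add_nonneg (hc1 s) (hc2 s), ?_⟩
  · rw [Finset.coe_union]
    exact Set.union_subset hT1 hT2
  · have h : ∀ s ∈ T1 ∪ T2, (c1 s + c2 s) • s = c1 s • s + c2 s • s :=
      fun s _ => add_smul _ _ _
    rw [Finset.sum_congr rfl h, Finset.sum_add_distrib]
    congr 1
    · rw [Finset.sum_subset Finset.subset_union_left]
      intro y _ hy; rw [hz1 y hy, zero_smul]
    · rw [Finset.sum_subset Finset.subset_union_right]
      intro y _ hy; rw [hz2 y hy, zero_smul]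

lemma smul_mem_coneGen {S : Set (Vec 4)} {x : Vec 4} {a : ℚ} (ha : 0 ≤ a)
    (hx : x ∈ coneGen S) : a • x ∈ coneGen S := by
  obtain ⟨T, c, hTS, hc, rfl⟩ := hx
  refine ⟨T, fun s => a * c s, hTS, fun s => mul_nonneg ha (hc s), ?_⟩
  rw [Finset.smul_sum]
  apply Finset.sum_congr rfl
  intro s _; rw [smul_smul]

lemma coneGen_subset_of_subset {S S' : Set (Vec 4)} (h : S ⊆ coneGen S') :
    coneGen S ⊆ coneGen S' := by
  rintro x ⟨T, c, hTS, hc, rfl⟩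
  refine Finset.sum_induction _ (fun z => z ∈ coneGen S') (fun a b ha hb => add_mem_coneGen ha hb)
    (zero_mem_coneGen S') ?_
  intro s hs
  exact smul_mem_coneGen (hc s) (h (hTS hs))

lemma cn_subset_of_subset {A B : Finset (LVec 4)} (h : A ⊆ B) : cn A ⊆ cn B :=
  coneGen_mono (Set.image_mono (Finset.coe_subset.mpr h))

lemma cn_insert_congr (x : LVec 4) {A B : Finset (LVec 4)}
    (h : cn A = cn B) : cn (insert x A) = cn (insert x B) := by
  have key : ∀ (C D : Finset (LVec 4)), cn C ⊆ cn D →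
      cn (insert x C) ⊆ cn (insert x D) := by
    intro C D hCD
    apply coneGen_subset_of_subset
    rintro y ⟨v, hv, rfl⟩
    rw [Finset.coe_insert, Set.mem_insert_iff] at hv
    rcases hv with rfl | hv
    · exact mem_cn_self (Finset.mem_insert_self _ _)
    · exact cn_subset_of_subset (Finset.subset_insert _ _) (hCD (mem_cn_self hv))
  exact Set.Subset.antisymm (key A B h.le) (key B A h.ge)

lemma u_nonneg_on_cone {S : Finset (LVec 4)} {u : Vec 4 →ₗ[ℚ] ℚ}
    (h : ∀ s ∈ S, 0 ≤ u (toQ s)) : ∀ x ∈ cn S, 0 ≤ u x := by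
  intro x hx
  obtain ⟨c, hc, rfl⟩ := mem_cn_iff.mp hx
  rw [map_sum]
  apply Finset.sum_nonneg
  intro s hs
  rw [map_smul, smul_eq_mul]
  exact mul_nonneg (hc s) (h s hs)

lemma u_zero_on_cone {S : Finset (LVec 4)} {u : Vec 4 →ₗ[ℚ] ℚ}
    (h : ∀ s ∈ S, u (toQ s) = 0) : ∀ x ∈ cn S, u x = 0 := by
  intro x hx
  obtain ⟨c, hc, rfl⟩ := mem_cn_iff.mp hx
  rw [map_sum]
  apply Finset.sum_eq_zero
  intro s hs
  rw [map_smul, smul_eq_mul, h s hs, mul_zero]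

lemma ker_filter {S : Finset (LVec 4)} {u : Vec 4 →ₗ[ℚ] ℚ}
    (hpos : ∀ s ∈ S, 0 ≤ u (toQ s)) {x : Vec 4}
    (hx : x ∈ cn S) (hker : u x = 0) :
    x ∈ cn (S.filter (fun s => u (toQ s) = 0)) := by
  classical
  obtain ⟨c, hc, rfl⟩ := mem_cn_iff.mp hx
  have hterms : ∀ s ∈ S, c s * u (toQ s) = 0 := by
    have h0 : ∑ s ∈ S, c s * u (toQ s) = 0 := by
      rw [← hker, map_sum]
      apply Finset.sum_congr rfl
      intro s _; rw [map_smul, smul_eq_mul]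
    exact (Finset.sum_eq_zero_iff_of_nonneg
      (fun s hs => mul_nonneg (hc s) (hpos s hs))).mp h0
  rw [mem_cn_iff]
  refine ⟨c, hc, ?_⟩
  rw [← Finset.sum_subset (Finset.filter_subset (fun s => u (toQ s) = 0) S)]
  intro s hs hns
  have hu : u (toQ s) ≠ 0 := by
    intro h0
    exact hns (Finset.mem_filter.mpr ⟨hs, h0⟩)
  have hc0 : c s = 0 := by
    rcases mul_eq_zero.mp (hterms s hs) with h | h
    · exact h
    · exact absurd h hu
  rw [hc0, zero_smul]

lemma ker_cone_eq {S : Finset (LVec 4)} {u : Vec 4 →ₗ[ℚ] ℚ}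
    (hpos : ∀ s ∈ S, 0 ≤ u (toQ s)) :
    {x ∈ cn S | u x = 0} = cn (S.filter (fun s => u (toQ s) = 0)) := by
  classical
  ext x
  constructor
  · rintro ⟨hx, hker⟩
    exact ker_filter hpos hx hker
  · intro hx
    refine ⟨cn_subset_of_subset (Finset.filter_subset _ _) hx, ?_⟩
    exact u_zero_on_cone (fun s hs => (Finset.mem_filter.mp hs).2) x hx

lemma isFaceOf_filter {S : Finset (LVec 4)} (u : Vec 4 →ₗ[ℚ] ℚ)
    (hpos : ∀ s ∈ S, 0 ≤ u (toQ s)) :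
    IsFaceOf (cn (S.filter (fun s => u (toQ s) = 0))) (cn S) :=
  ⟨u, u_nonneg_on_cone hpos, (ker_cone_eq hpos).symm⟩

lemma face_classify {S : Finset (LVec 4)} {G : Set (Vec 4)}
    (h : IsFaceOf G (cn S)) :
    ∃ B : Finset (LVec 4), B ⊆ S ∧ G = cn B := by
  classical
  obtain ⟨u, hpos, hG⟩ := h
  have hpos' : ∀ s ∈ S, 0 ≤ u (toQ s) := fun s hs => hpos _ (mem_cn_self hs)
  exact ⟨S.filter (fun s => u (toQ s) = 0), Finset.filter_subset _ _,
    hG.trans (ker_cone_eq hpos')⟩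

lemma notMem_of_cert {S : Finset (LVec 4)} {v w : LVec 4}
    (h : ∀ s ∈ S, 0 ≤ idot w s) (hv : idot w v < 0) :
    toQ v ∉ cn S := by
  intro hmem
  have h0 : (0:ℚ) ≤ dotL w (toQ v) :=
    u_nonneg_on_cone (fun s hs => by rw [dotL_toQ]; exact_mod_cast h s hs) _ hmem
  rw [dotL_toQ] at h0
  have h1 : (idot w v : ℚ) < 0 := by exact_mod_cast hv
  linarith

end Aux

namespace Aux
open Finset

lemma idot_neg (w v : LVec 4) : idot (-w) v = - idot w v := by
  simp [idot, Finset.sum_neg_distrib]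

/-- generator/dual data for a smooth 4-dimensional cone -/
structure CD where
  g : Fin 4 → LVec 4
  d : Fin 4 → LVec 4

def CD.ok (c : CD) : Prop := ∀ i j, idot (c.d i) (c.g j) = if i = j then 1 else 0

instance (c : CD) : Decidable c.ok := by unfold CD.ok; infer_instance

def CD.M (c : CD) : Finset (LVec 4) := Finset.image c.g Finset.univ

lemma CD.g_inj {c : CD} (hok : c.ok) : Function.Injective c.g := by
  intro i j h
  by_contra hne
  have h1 : idot (c.d j) (c.g i) = 0 := by rw [hok j i, if_neg (Ne.symm hne)]
  have h2 : idot (c.d j) (c.g j) = 1 := by rw [hok j j, if_pos rfl]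
  rw [h] at h1
  rw [h1] at h2
  exact absurd h2 (by norm_num)

lemma CD.coord {c : CD} (hok : c.ok) (co : Fin 4 → ℚ) (j : Fin 4) :
    dotL (c.d j) (∑ i, co i • toQ (c.g i)) = co j := by
  rw [map_sum]
  have h : ∀ i, dotL (c.d j) (co i • toQ (c.g i)) = if j = i then co i else 0 := by
    intro i
    rw [map_smul, smul_eq_mul, dotL_toQ, hok j i]
    by_cases h : j = i <;> simp [h]
  rw [Finset.sum_congr rfl (fun i _ => h i)]
  simp

/-- B as image of its index set -/
lemma CD.B_eq {c : CD} {B : Finset (LVec 4)} (hB : B ⊆ c.M) :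
    B = Finset.image c.g (Finset.univ.filter (fun i => c.g i ∈ B)) := by
  ext s
  simp only [Finset.mem_image, Finset.mem_filter, Finset.mem_univ, true_and]
  constructor
  · intro hs
    obtain ⟨i, _, rfl⟩ := Finset.mem_image.mp (hB hs)
    exact ⟨i, hs, rfl⟩
  · rintro ⟨i, hi, rfl⟩
    exact hi

lemma CD.rep {c : CD} (hok : c.ok) {B : Finset (LVec 4)} (hB : B ⊆ c.M) {x : Vec 4}
    (hx : x ∈ cn B) :
    ∃ co : Fin 4 → ℚ, (∀ i, 0 ≤ co i) ∧ (∀ i, c.g i ∉ B → co i = 0) ∧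
      x = ∑ i, co i • toQ (c.g i) := by
  classical
  obtain ⟨cf, hcf, rfl⟩ := mem_cn_iff.mp hx
  refine ⟨fun i => if c.g i ∈ B then cf (c.g i) else 0, ?_, ?_, ?_⟩
  · intro i
    by_cases h : c.g i ∈ B <;> simp [h, hcf]
  · intro i hi
    simp [hi]
  · have hsum : ∑ s ∈ B, cf s • toQ s
        = ∑ i ∈ Finset.univ.filter (fun i => c.g i ∈ B), cf (c.g i) • toQ (c.g i) := by
      conv_lhs => rw [CD.B_eq hB]
      rw [Finset.sum_image (fun a _ b _ h => CD.g_inj hok h)]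
    rw [hsum, Finset.sum_filter]
    apply Finset.sum_congr rfl
    intro i _
    by_cases h : c.g i ∈ B <;> simp [h]

lemma CD.mem_cn_of_rep {c : CD} (hok : c.ok) {B : Finset (LVec 4)} (hB : B ⊆ c.M)
    (co : Fin 4 → ℚ) (hco : ∀ i, 0 ≤ co i) (hsupp : ∀ i, c.g i ∉ B → co i = 0) :
    ∑ i, co i • toQ (c.g i) ∈ cn B := by
  classical
  rw [mem_cn_iff]
  refine ⟨fun s => ∑ j ∈ Finset.univ.filter (fun j => c.g j = s), co j,
    ?_, ?_⟩
  · intro s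
    exact Finset.sum_nonneg (fun j _ => hco j)
  · have key : ∀ i : Fin 4, (∑ j ∈ Finset.univ.filter (fun j => c.g j = c.g i), co j) = co i := by
      intro i
      have hfil : Finset.univ.filter (fun j => c.g j = c.g i) = {i} := by
        ext j
        simp only [Finset.mem_filter, Finset.mem_univ, true_and, Finset.mem_singleton]
        exact ⟨fun h => CD.g_inj hok h, fun h => by rw [h]⟩
      rw [hfil, Finset.sum_singleton]
    have hsum : ∑ s ∈ B, (∑ j ∈ Finset.univ.filter (fun j => c.g j = s), co j) • toQ s
        = ∑ i ∈ Finset.univ.filter (fun i => c.g i ∈ B), co i • toQ (c.g i) := by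
      conv_lhs => rw [CD.B_eq hB]
      rw [Finset.sum_image (fun a _ b _ h => CD.g_inj hok h)]
      exact Finset.sum_congr rfl (fun i _ => by rw [key i])
    rw [hsum, Finset.sum_filter]
    apply Finset.sum_congr rfl
    intro i _
    by_cases h : c.g i ∈ B
    · simp [h]
    · simp [h, hsupp i h]

lemma CD.inter_same {c : CD} (hok : c.ok) {B1 B2 : Finset (LVec 4)}
    (hB1 : B1 ⊆ c.M) (hB2 : B2 ⊆ c.M) :
    cn B1 ∩ cn B2 = cn (B1 ∩ B2) := by
  apply Set.Subset.antisymm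
  · rintro x ⟨hx1, hx2⟩
    obtain ⟨co1, hco1, hs1, rfl⟩ := CD.rep hok hB1 hx1
    obtain ⟨co2, hco2, hs2, hx⟩ := CD.rep hok hB2 hx2
    have hceq : ∀ j, co1 j = co2 j := by
      intro j
      rw [← CD.coord hok co1 j, hx, CD.coord hok co2 j]
    apply CD.mem_cn_of_rep hok (Finset.inter_subset_left.trans hB1) co1 hco1
    intro i hi
    rw [Finset.mem_inter] at hi
    push_neg at hi
    by_cases h : c.g i ∈ B1
    · rw [hceq i]; exact hs2 i (hi h)
    · exact hs1 i h
  · intro x hx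
    exact ⟨cn_subset_of_subset Finset.inter_subset_left hx,
      cn_subset_of_subset Finset.inter_subset_right hx⟩

/-- the face functional: sum of duals of the generators of B not in A -/
noncomputable def CD.faceU (c : CD) (A B : Finset (LVec 4)) : Vec 4 →ₗ[ℚ] ℚ :=
  ∑ i ∈ Finset.univ.filter (fun i => c.g i ∈ B ∧ c.g i ∉ A), dotL (c.d i)

lemma CD.faceU_val {c : CD} (hok : c.ok) (A B : Finset (LVec 4)) (j : Fin 4) :
    (CD.faceU c A B) (toQ (c.g j)) = if c.g j ∈ B ∧ c.g j ∉ A then 1 else 0 := by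
  classical
  rw [CD.faceU, LinearMap.sum_apply]
  have h : ∀ i, dotL (c.d i) (toQ (c.g j)) = if i = j then (1:ℚ) else 0 := by
    intro i
    rw [dotL_toQ, hok i j]
    by_cases h : i = j <;> simp [h]
  rw [Finset.sum_congr rfl (fun i _ => h i)]
  rw [Finset.sum_ite_eq' (Finset.univ.filter (fun i => c.g i ∈ B ∧ c.g i ∉ A)) j (fun _ => (1:ℚ))]
  by_cases h : c.g j ∈ B ∧ c.g j ∉ A <;> simp [h]

lemma CD.isFaceOf_sub {c : CD} (hok : c.ok) {A B : Finset (LVec 4)}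
    (hAB : A ⊆ B) (hB : B ⊆ c.M) : IsFaceOf (cn A) (cn B) := by
  classical
  have hpos : ∀ s ∈ B, 0 ≤ (CD.faceU c A B) (toQ s) := by
    intro s hs
    obtain ⟨j, _, rfl⟩ := Finset.mem_image.mp (hB hs)
    rw [CD.faceU_val hok]
    by_cases h : c.g j ∈ B ∧ c.g j ∉ A <;> simp [h]
  have hfil : B.filter (fun s => (CD.faceU c A B) (toQ s) = 0) = A := by
    ext s
    rw [Finset.mem_filter]
    constructor
    · rintro ⟨hsB, hval⟩
      obtain ⟨j, _, rfl⟩ := Finset.mem_image.mp (hB hsB)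
      rw [CD.faceU_val hok] at hval
      by_contra hsA
      rw [if_pos ⟨hsB, hsA⟩] at hval
      norm_num at hval
    · intro hsA
      refine ⟨hAB hsA, ?_⟩
      obtain ⟨j, _, rfl⟩ := Finset.mem_image.mp (hB (hAB hsA))
      rw [CD.faceU_val hok, if_neg (fun h => h.2 hsA)]
  have := isFaceOf_filter (S := B) (CD.faceU c A B) hpos
  rwa [hfil] at this

lemma CD.ray_notMem {c : CD} (hok : c.ok) {B : Finset (LVec 4)} (hB : B ⊆ c.M)
    {v : LVec 4} (hv : v ∈ c.M) (hvB : v ∉ B) : toQ v ∉ cn B := by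
  obtain ⟨j, _, rfl⟩ := Finset.mem_image.mp hv
  apply notMem_of_cert (w := -(c.d j))
  · intro s hs
    obtain ⟨i, _, rfl⟩ := Finset.mem_image.mp (hB hs)
    have hne : j ≠ i := fun h => hvB (h ▸ hs)
    rw [idot_neg, hok j i, if_neg hne]
    norm_num
  · rw [idot_neg, hok j j, if_pos rfl]
    norm_num

/-- key cross-cone intersection lemma via a separating functional -/
lemma inter_cert {c1 c2 : CD} (h1 : c1.ok) (h2 : c2.ok) {B1 B2 : Finset (LVec 4)}
    (hB1 : B1 ⊆ c1.M) (hB2 : B2 ⊆ c2.M) (w : LVec 4)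
    (hw1 : ∀ v ∈ c1.M, 0 ≤ idot w v) (hw2 : ∀ v ∈ c2.M, idot w v ≤ 0)
    (hz1 : c1.M.filter (fun v => idot w v = 0) = c1.M ∩ c2.M)
    (hz2 : c2.M.filter (fun v => idot w v = 0) = c1.M ∩ c2.M) :
    cn B1 ∩ cn B2 = cn (B1 ∩ B2) := by
  classical
  apply Set.Subset.antisymm
  · rintro x ⟨hx1, hx2⟩
    have hpos1 : ∀ s ∈ B1, 0 ≤ (dotL w) (toQ s) := by
      intro s hs; rw [dotL_toQ]; exact_mod_cast hw1 s (hB1 hs)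
    have hpos2 : ∀ s ∈ B2, 0 ≤ (dotL (-w)) (toQ s) := by
      intro s hs; rw [dotL_toQ, idot_neg]
      have := hw2 s (hB2 hs)
      push_cast
      linarith [ (by exact_mod_cast this : (idot w s : ℚ) ≤ 0) ]
    have hxw1 : 0 ≤ dotL w x := u_nonneg_on_cone hpos1 x hx1
    have hxw2 : 0 ≤ dotL (-w) x := u_nonneg_on_cone hpos2 x hx2
    have hneg : dotL (-w) x = - dotL w x := by
      simp [dotL_apply, Finset.sum_neg_distrib, neg_mul]
    have hker : dotL w x = 0 := by rw [hneg] at hxw2; linarith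
    have hker' : dotL (-w) x = 0 := by rw [hneg, hker, neg_zero]
    have hk1 := ker_filter hpos1 hx1 hker
    have hk2 := ker_filter hpos2 hx2 hker'
    have hf1 : B1.filter (fun s => (dotL w) (toQ s) = 0) = B1 ∩ (c1.M ∩ c2.M) := by
      ext s
      rw [← hz1]
      simp only [Finset.mem_filter, Finset.mem_inter, dotL_toQ]
      constructor
      · rintro ⟨hs, hv⟩
        exact ⟨hs, hB1 hs, by exact_mod_cast hv⟩
      · rintro ⟨hs, _, hv⟩
        exact ⟨hs, by exact_mod_cast hv⟩
    have hf2 : B2.filter (fun s => (dotL (-w)) (toQ s) = 0) = B2 ∩ (c1.M ∩ c2.M) := by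
      ext s
      rw [← hz2]
      simp only [Finset.mem_filter, Finset.mem_inter, dotL_toQ, idot_neg]
      constructor
      · rintro ⟨hs, hv⟩
        refine ⟨hs, hB2 hs, ?_⟩
        have : -(idot w s : ℚ) = 0 := by exact_mod_cast hv
        exact_mod_cast (by linarith : (idot w s : ℚ) = 0)
      · rintro ⟨hs, _, hv⟩
        refine ⟨hs, ?_⟩
        have : (idot w s : ℚ) = 0 := by exact_mod_cast hv
        push_cast
        linarith
    rw [hf1] at hk1
    rw [hf2] at hk2
    have hsub1 : B1 ∩ (c1.M ∩ c2.M) ⊆ c1.M := fun s hs =>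
      (Finset.mem_inter.mp ((Finset.mem_inter.mp hs).2)).1
    have hsub2 : B2 ∩ (c1.M ∩ c2.M) ⊆ c1.M := fun s hs =>
      (Finset.mem_inter.mp ((Finset.mem_inter.mp hs).2)).1
    have := CD.inter_same h1 hsub1 hsub2 (B1 := B1 ∩ (c1.M ∩ c2.M)) (B2 := B2 ∩ (c1.M ∩ c2.M))
    have hmem : x ∈ cn ((B1 ∩ (c1.M ∩ c2.M)) ∩ (B2 ∩ (c1.M ∩ c2.M))) := by
      rw [← this]; exact ⟨hk1, hk2⟩
    refine cn_subset_of_subset ?_ hmem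
    intro s hs
    simp only [Finset.mem_inter] at hs ⊢
    exact ⟨hs.1.1, hs.2.1⟩
  · intro x hx
    exact ⟨cn_subset_of_subset Finset.inter_subset_left hx,
      cn_subset_of_subset Finset.inter_subset_right hx⟩

end Aux

namespace Aux
open Finset

def Fam (MF : Finset (Finset (LVec 4))) : Set (Set (Vec 4)) :=
  {σ | ∃ B : Finset (LVec 4), (∃ M ∈ MF, B ⊆ M) ∧ σ = cn B}

lemma mem_Fam {MF : Finset (Finset (LVec 4))} {B M : Finset (LVec 4)}
    (hM : M ∈ MF) (hB : B ⊆ M) : cn B ∈ Fam MF := ⟨B, ⟨M, hM, hB⟩, rfl⟩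

lemma Fam_finite (MF : Finset (Finset (LVec 4))) : (Fam MF).Finite := by
  classical
  apply Set.Finite.subset (Set.Finite.image cn (MF.biUnion Finset.powerset).finite_toSet)
  rintro σ ⟨B, ⟨M, hM, hB⟩, rfl⟩
  refine ⟨B, ?_, rfl⟩
  simp only [Finset.coe_biUnion, Set.mem_iUnion, Finset.mem_coe, Finset.mem_powerset]
  exact ⟨M, hM, hB⟩

lemma Fam_faces (MF : Finset (Finset (LVec 4))) :
    ∀ σ ∈ Fam MF, ∀ G, IsFaceOf G σ → G ∈ Fam MF := by
  rintro σ ⟨B, ⟨M, hM, hB⟩, rfl⟩ G hG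
  obtain ⟨B', hB', rfl⟩ := face_classify hG
  exact mem_Fam hM (hB'.trans hB)

lemma basis_of_dual (g d : Fin 4 → LVec 4) (hok : (CD.mk g d).ok) :
    ∃ b : Module.Basis (Fin 4) ℤ (LVec 4), ∀ i, b i = g i := by
  set Gm : Matrix (Fin 4) (Fin 4) ℤ := Matrix.of (fun j i => g i j) with hGm
  set Pm : Matrix (Fin 4) (Fin 4) ℤ := Matrix.of (fun i j => d i j) with hPm
  have h2 : Pm * Gm = 1 := by
    ext i j
    rw [Matrix.mul_apply, Matrix.one_apply]
    have := hok i j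
    simpa [hGm, hPm, idot] using this
  have h1 : Gm * Pm = 1 := mul_eq_one_comm.mp h2
  have hco : (Matrix.toLin' Gm).comp (Matrix.toLin' Pm) = LinearMap.id := by
    rw [← Matrix.toLin'_mul, h1, Matrix.toLin'_one]
  have hco2 : (Matrix.toLin' Pm).comp (Matrix.toLin' Gm) = LinearMap.id := by
    rw [← Matrix.toLin'_mul, h2, Matrix.toLin'_one]
  set eqv : LVec 4 ≃ₗ[ℤ] LVec 4 := LinearEquiv.ofLinear (Matrix.toLin' Gm) (Matrix.toLin' Pm) hco hco2
  refine ⟨(Pi.basisFun ℤ (Fin 4)).map eqv, ?_⟩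
  intro i
  funext j
  rw [Module.Basis.map_apply]
  simp [eqv, Matrix.toLin'_apply, Matrix.mulVec, dotProduct,
    Pi.basisFun_apply, Pi.single_apply, mul_ite, hGm]

lemma smooth_of_cd {c : CD} (hok : c.ok) {B : Finset (LVec 4)} (hB : B ⊆ c.M) :
    ∃ (b : Module.Basis (Fin 4) ℤ (LVec 4)) (I : Finset (Fin 4)),
      cn B = coneGen (toQ '' (⇑b '' ↑I)) := by
  classical
  obtain ⟨b, hb⟩ := basis_of_dual c.g c.d hok
  refine ⟨b, Finset.univ.filter (fun i => c.g i ∈ B), ?_⟩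
  have himg : (⇑b '' ↑(Finset.univ.filter (fun i => c.g i ∈ B))) = (↑B : Set (LVec 4)) := by
    ext v
    simp only [Set.mem_image, Finset.mem_coe, Finset.mem_filter, Finset.mem_univ, true_and]
    constructor
    · rintro ⟨i, hi, rfl⟩
      rwa [hb i]
    · intro hv
      obtain ⟨i, _, rfl⟩ := Finset.mem_image.mp (hB hv)
      exact ⟨i, hv, hb i⟩
  rw [himg]
  rfl

theorem starSubdiv_Fam
    (MF MF' : Finset (Finset (LVec 4))) (T : Finset (LVec 4)) (x : LVec 4)
    (hx : ∑ t ∈ T, t = x)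
    (hray : ∀ M ∈ MF, ∀ B ⊆ M, ∀ t ∈ T, toQ t ∈ cn B → t ∈ B)
    (hprim : ∀ M ∈ MF, ∀ v ∈ M, IsPrimitive v)
    (hface : ∀ M ∈ MF, ∀ A ⊆ M, IsFaceOf (cn A) (cn M))
    (hkeep : ∀ M ∈ MF, ∀ B ⊆ M, ¬ T ⊆ B → ∃ M' ∈ MF', B ⊆ M')
    (hnew : ∀ M ∈ MF, T ⊆ M → ∀ B ⊆ M, ¬ T ⊆ B → ∃ M' ∈ MF', insert x B ⊆ M')
    (hback_old : ∀ M' ∈ MF', ∀ B ⊆ M', x ∉ B → (∃ M ∈ MF, B ⊆ M) ∧ ¬ T ⊆ B)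
    (hback_new : ∀ M' ∈ MF', ∀ B ⊆ M', x ∈ B →
      ∃ M ∈ MF, T ⊆ M ∧ B.erase x ⊆ M ∧ ¬ T ⊆ B.erase x) :
    starSubdiv (Fam MF) T = Fam MF' := by
  have hTcn : ∀ B : Finset (LVec 4), coneGen (toQ '' (↑T : Set (LVec 4))) = cn T := fun _ => rfl
  ext σ
  constructor
  · rintro (⟨hσF, hnc⟩ | ⟨A, hAg, ⟨σ0, hσ0F, hTσ0, hfaceA⟩, hncA, rfl⟩)
    · obtain ⟨B, ⟨M, hM, hB⟩, rfl⟩ := hσF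
      have hTB : ¬ T ⊆ B := fun hTB => hnc (cn_subset_of_subset hTB)
      obtain ⟨M', hM', hBM'⟩ := hkeep M hM B hB hTB
      exact mem_Fam hM' hBM'
    · obtain ⟨B, ⟨M, hM, hB⟩, rfl⟩ := hσ0F
      have hTB : T ⊆ B := fun t ht => hray M hM B hB t ht (hTσ0 (mem_cn_self ht))
      obtain ⟨B', hB'B, hAB'⟩ := face_classify (S := B) hfaceA
      have hTB' : ¬ T ⊆ B' := fun h => hncA (hAB' ▸ cn_subset_of_subset h)
      obtain ⟨M', hM', hiB'⟩ := hnew M hM (hTB.trans hB) B' (hB'B.trans hB) hTB'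
      have heq : cn (insert x A) = cn (insert x B') := cn_insert_congr x hAB'
      rw [hx, show coneGen (toQ '' (↑(insert x A) : Set (LVec 4))) = cn (insert x A) from rfl, heq]
      exact mem_Fam hM' hiB'
  · rintro ⟨B, ⟨M', hM', hB⟩, rfl⟩
    by_cases hxB : x ∈ B
    · right
      obtain ⟨M, hM, hTM, hAM, hTA⟩ := hback_new M' hM' B hB hxB
      refine ⟨B.erase x, ?_, ⟨cn M, mem_Fam hM (subset_refl M),
        cn_subset_of_subset hTM, hface M hM _ hAM⟩, ?_, ?_⟩
      · intro v hv
        rw [Finset.mem_coe] at hv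
        refine ⟨hprim M hM v (hAM hv), ?_⟩
        have hsing : ({toQ v} : Set (Vec 4)) = toQ '' (↑({v} : Finset (LVec 4)) : Set (LVec 4)) := by
          simp
        rw [hsing]
        exact mem_Fam hM (Finset.singleton_subset_iff.mpr (hAM hv))
      · intro hc
        obtain ⟨t, htT, htA⟩ := Finset.not_subset.mp hTA
        exact htA (hray M hM _ hAM t htT (hc (mem_cn_self htT)))
      · rw [hx]
        show cn B = cn (insert x (B.erase x))
        rw [Finset.insert_erase hxB]
    · left
      obtain ⟨⟨M, hM, hBM⟩, hTB⟩ := hback_old M' hM' B hB hxB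
      refine ⟨mem_Fam hM hBM, ?_⟩
      intro hc
      obtain ⟨t, htT, htB⟩ := Finset.not_subset.mp hTB
      exact htB (hray M hM B hBM t htT (hc (mem_cn_self htT)))

end Aux
namespace Aux
open Finset

def vU : Fin 7 → LVec 4 := ![e0, e1, e2, e3, e4, e5, e6]

lemma vU_inj : Function.Injective vU := by decide

def mP0 : Fin 5 → Finset (Fin 7) := ![({1, 2, 3, 4} : Finset (Fin 7)), ({0, 2, 3, 4} : Finset (Fin 7)), ({0, 1, 3, 4} : Finset (Fin 7)), ({0, 1, 2, 4} : Finset (Fin 7)), ({0, 1, 2, 3} : Finset (Fin 7))]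

def mP : Fin 5 → Finset (LVec 4) := fun k => (mP0 k).image vU

def maxP : Finset (Finset (LVec 4)) := Finset.image mP Finset.univ

def gP : Fin 5 → Fin 4 → LVec 4 := ![![![(1 : ℤ), 0, 0, 0], ![(0 : ℤ), 1, 0, 0], ![(0 : ℤ), 0, 1, 0], ![(0 : ℤ), 0, 0, 1]], ![![(-1 : ℤ), -1, -1, -1], ![(0 : ℤ), 1, 0, 0], ![(0 : ℤ), 0, 1, 0], ![(0 : ℤ), 0, 0, 1]], ![![(-1 : ℤ), -1, -1, -1], ![(1 : ℤ), 0, 0, 0], ![(0 : ℤ), 0, 1, 0], ![(0 : ℤ), 0, 0, 1]], ![![(-1 : ℤ), -1, -1, -1], ![(1 : ℤ), 0, 0, 0], ![(0 : ℤ), 1, 0, 0], ![(0 : ℤ), 0, 0, 1]], ![![(-1 : ℤ), -1, -1, -1], ![(1 : ℤ), 0, 0, 0], ![(0 : ℤ), 1, 0, 0], ![(0 : ℤ), 0, 1, 0]]]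

def dP : Fin 5 → Fin 4 → LVec 4 := ![![![(1 : ℤ), 0, 0, 0], ![(0 : ℤ), 1, 0, 0], ![(0 : ℤ), 0, 1, 0], ![(0 : ℤ), 0, 0, 1]], ![![(-1 : ℤ), 0, 0, 0], ![(-1 : ℤ), 1, 0, 0], ![(-1 : ℤ), 0, 1, 0], ![(-1 : ℤ), 0, 0, 1]], ![![(0 : ℤ), -1, 0, 0], ![(1 : ℤ), -1, 0, 0], ![(0 : ℤ), -1, 1, 0], ![(0 : ℤ), -1, 0, 1]], ![![(0 : ℤ), 0, -1, 0], ![(1 : ℤ), 0, -1, 0], ![(0 : ℤ), 1, -1, 0], ![(0 : ℤ), 0, -1, 1]], ![![(0 : ℤ), 0, 0, -1], ![(1 : ℤ), 0, 0, -1], ![(0 : ℤ), 1, 0, -1], ![(0 : ℤ), 0, 1, -1]]]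

def cdP : Fin 5 → CD := fun k => ⟨gP k, dP k⟩

lemma cdP_ok : ∀ k, (cdP k).ok := by decide

lemma cdP_M : ∀ k, (cdP k).M = mP k := by decide

def wtP : Fin 5 → Fin 7 → LVec 4 := ![![![(0 : ℤ), 0, 0, 1], ![(-1 : ℤ), 0, 0, 0], ![(0 : ℤ), -1, 0, 0], ![(0 : ℤ), 0, -1, 0], ![(0 : ℤ), 0, 0, -1], ![(0 : ℤ), 0, 0, 0], ![(0 : ℤ), 0, 0, 0]], ![![(1 : ℤ), 0, 0, 0], ![(-3 : ℤ), 0, 0, 0], ![(1 : ℤ), -1, 0, 0], ![(1 : ℤ), 0, -1, 0], ![(1 : ℤ), 0, 0, -1], ![(-3 : ℤ), 0, 0, 0], ![(0 : ℤ), 0, 0, 0]], ![![(0 : ℤ), 1, 0, 0], ![(-1 : ℤ), 1, 0, 0], ![(0 : ℤ), -3, 0, 0], ![(0 : ℤ), 1, -1, 0], ![(0 : ℤ), 1, 0, -1], ![(0 : ℤ), -3, 0, 0], ![(0 : ℤ), -3, 0, 0]], ![![(0 : ℤ), 0, 1, 0], ![(-1 : ℤ), 0, 1, 0], ![(0 :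 ℤ), -1, 1, 0], ![(0 : ℤ), 0, -3, 0], ![(0 : ℤ), 0, 1, -1], ![(0 : ℤ), 0, -3, 0], ![(0 : ℤ), 0, -3, 0]], ![![(0 : ℤ), 0, 0, 1], ![(-1 : ℤ), 0, 0, 1], ![(0 : ℤ), -1, 0, 1], ![(0 : ℤ), 0, -1, 1], ![(0 : ℤ), 0, 0, -3], ![(0 : ℤ), 0, 0, 0], ![(0 : ℤ), 0, 0, -3]]]

lemma wtP_ok : ∀ (k : Fin 5), ∀ l ∈ ({1, 2, 3} : Finset (Fin 7)), (∀ s ∈ mP k, s ≠ vU l → 0 ≤ idot (wtP k l) s) ∧ idot (wtP k l) (vU l) < 0 := by decide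

def mX0 : Fin 9 → Finset (Fin 7) := ![({0, 2, 3, 4} : Finset (Fin 7)), ({0, 1, 3, 4} : Finset (Fin 7)), ({0, 1, 2, 4} : Finset (Fin 7)), ({5, 2, 3, 4} : Finset (Fin 7)), ({5, 1, 3, 4} : Finset (Fin 7)), ({5, 1, 2, 4} : Finset (Fin 7)), ({5, 0, 2, 3} : Finset (Fin 7)), ({5, 0, 1, 3} : Finset (Fin 7)), ({5, 0, 1, 2} : Finset (Fin 7))]

def mX : Fin 9 → Finset (LVec 4) := fun k => (mX0 k).image vU

def maxX : Finset (Finset (LVec 4)) := Finset.image mX Finset.univ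

def gX : Fin 9 → Fin 4 → LVec 4 := ![![![(-1 : ℤ), -1, -1, -1], ![(0 : ℤ), 1, 0, 0], ![(0 : ℤ), 0, 1, 0], ![(0 : ℤ), 0, 0, 1]], ![![(-1 : ℤ), -1, -1, -1], ![(1 : ℤ), 0, 0, 0], ![(0 : ℤ), 0, 1, 0], ![(0 : ℤ), 0, 0, 1]], ![![(-1 : ℤ), -1, -1, -1], ![(1 : ℤ), 0, 0, 0], ![(0 : ℤ), 1, 0, 0], ![(0 : ℤ), 0, 0, 1]], ![![(1 : ℤ), 1, 1, 0], ![(0 : ℤ), 1, 0, 0], ![(0 : ℤ), 0, 1, 0], ![(0 : ℤ), 0, 0, 1]], ![![(1 : ℤ), 1, 1, 0], ![(1 : ℤ), 0, 0, 0], ![(0 : ℤ), 0, 1, 0], ![(0 : ℤ), 0, 0, 1]], ![![(1 : ℤ), 1, 1, 0], ![(1 : ℤ), 0, 0, 0], ![(0 : ℤ), 1, 0, 0], ![(0 : ℤ), 0, 0, 1]], ![![(1 : ℤ), 1, 1, 0], ![(-1 : ℤ), -1, -1, -1], ![(0 : ℤ), 1, 0, 0], ![(0 : ℤ), 0, 1,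 0]], ![![(1 : ℤ), 1, 1, 0], ![(-1 : ℤ), -1, -1, -1], ![(1 : ℤ), 0, 0, 0], ![(0 : ℤ), 0, 1, 0]], ![![(1 : ℤ), 1, 1, 0], ![(-1 : ℤ), -1, -1, -1], ![(1 : ℤ), 0, 0, 0], ![(0 : ℤ), 1, 0, 0]]]

def dX : Fin 9 → Fin 4 → LVec 4 := ![![![(-1 : ℤ), 0, 0, 0], ![(-1 : ℤ), 1, 0, 0], ![(-1 : ℤ), 0, 1, 0], ![(-1 : ℤ), 0, 0, 1]], ![![(0 : ℤ), -1, 0, 0], ![(1 : ℤ), -1, 0, 0], ![(0 : ℤ), -1, 1, 0], ![(0 : ℤ), -1, 0, 1]], ![![(0 : ℤ), 0, -1, 0], ![(1 : ℤ), 0, -1, 0], ![(0 : ℤ), 1, -1, 0], ![(0 : ℤ), 0, -1, 1]], ![![(1 : ℤ), 0, 0, 0], ![(-1 : ℤ), 1, 0, 0], ![(-1 : ℤ), 0, 1, 0], ![(0 : ℤ), 0, 0, 1]], ![![(0 : ℤ), 1, 0, 0], ![(1 : ℤ), -1, 0, 0], ![(0 : ℤ), -1, 1, 0], ![(0 : ℤ),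 0, 0, 1]], ![![(0 : ℤ), 0, 1, 0], ![(1 : ℤ), 0, -1, 0], ![(0 : ℤ), 1, -1, 0], ![(0 : ℤ), 0, 0, 1]], ![![(1 : ℤ), 0, 0, -1], ![(0 : ℤ), 0, 0, -1], ![(-1 : ℤ), 1, 0, 0], ![(-1 : ℤ), 0, 1, 0]], ![![(0 : ℤ), 1, 0, -1], ![(0 : ℤ), 0, 0, -1], ![(1 : ℤ), -1, 0, 0], ![(0 : ℤ), -1, 1, 0]], ![![(0 : ℤ), 0, 1, -1], ![(0 : ℤ), 0, 0, -1], ![(1 : ℤ), 0, -1, 0], ![(0 : ℤ), 1, -1, 0]]]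

def cdX : Fin 9 → CD := fun k => ⟨gX k, dX k⟩

lemma cdX_ok : ∀ k, (cdX k).ok := by decide

lemma cdX_M : ∀ k, (cdX k).M = mX k := by decide

def wtX : Fin 9 → Fin 7 → LVec 4 := ![![![(1 : ℤ), 0, 0, 0], ![(-3 : ℤ), 0, 0, 0], ![(1 : ℤ), -1, 0, 0], ![(1 : ℤ), 0, -1, 0], ![(1 : ℤ), 0, 0, -1], ![(-3 : ℤ), 0, 0, 0], ![(0 : ℤ), 0, 0, 0]], ![![(0 : ℤ), 1, 0, 0], ![(-1 : ℤ), 1, 0, 0], ![(0 : ℤ), -3, 0, 0], ![(0 : ℤ), 1, -1, 0], ![(0 : ℤ), 1, 0, -1], ![(0 : ℤ), -3, 0, 0], ![(0 : ℤ), -3, 0, 0]], ![![(0 : ℤ), 0, 1, 0], ![(-1 : ℤ), 0, 1, 0], ![(0 : ℤ), -1, 1, 0], ![(0 : ℤ), 0, -3, 0], ![(0 : ℤ), 0, 1, -1], ![(0 : ℤ), 0, -3, 0], ![(0 : ℤ), 0, -3, 0]], ![![(-3 : ℤ), 0, 3, 1], ![(-3 : ℤ), 0, 3, 0], ![(1 :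 ℤ), -1, 0, 0], ![(1 : ℤ), 0, -1, 0], ![(0 : ℤ), 0, 0, -1], ![(-1 : ℤ), 0, 0, 0], ![(0 : ℤ), 0, 0, 0]], ![![(0 : ℤ), -3, 3, 1], ![(-1 : ℤ), 1, 0, 0], ![(0 : ℤ), -3, 3, 0], ![(0 : ℤ), 1, -1, 0], ![(0 : ℤ), 0, 0, -1], ![(0 : ℤ), -1, 0, 0], ![(1 : ℤ), -3, 2, 0]], ![![(0 : ℤ), 0, 0, 1], ![(-1 : ℤ), 0, 1, 0], ![(0 : ℤ), -1, 1, 0], ![(0 : ℤ), 1, -1, 0], ![(0 : ℤ), 0, 0, -1], ![(0 : ℤ), 0, -1, 0], ![(1 : ℤ), 0, -1, 0]], ![![(0 : ℤ), 0, 0, 1], ![(-3 : ℤ), 0, 3, -3], ![(1 : ℤ), -1, 0, 0], ![(1 : ℤ), 0, -1, 0], ![(-3 : ℤ), 0, 3, -3], ![(-1 : ℤ), 0, 0, 1], ![(-2 : ℤ), 0, 2, -3]], ![![(0 : ℤ), 0, 0, 1], ![(-1 : ℤ), 1, 0, 0], ![(0 : ℤ), -3, 3, -3], ![(0 : ℤ),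 1, -1, 0], ![(0 : ℤ), -3, 3, -3], ![(0 : ℤ), -1, 0, 1], ![(0 : ℤ), -3, 3, -3]], ![![(0 : ℤ), 0, 0, 1], ![(-1 : ℤ), 0, 1, 0], ![(0 : ℤ), -1, 1, 0], ![(0 : ℤ), 1, -1, -3], ![(0 : ℤ), 0, 0, -3], ![(0 : ℤ), 0, -1, 1], ![(0 : ℤ), 0, 0, -3]]]

lemma wtX_ok : ∀ (k : Fin 9), ∀ l ∈ ({2, 3, 4} : Finset (Fin 7)), (∀ s ∈ mX k, s ≠ vU l → 0 ≤ idot (wtX k l) s) ∧ idot (wtX k l) (vU l) < 0 := by decide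

def mW0 : Fin 13 → Finset (Fin 7) := ![({0, 1, 3, 4} : Finset (Fin 7)), ({0, 1, 2, 4} : Finset (Fin 7)), ({5, 1, 3, 4} : Finset (Fin 7)), ({5, 1, 2, 4} : Finset (Fin 7)), ({5, 0, 2, 3} : Finset (Fin 7)), ({5, 0, 1, 3} : Finset (Fin 7)), ({5, 0, 1, 2} : Finset (Fin 7)), ({6, 0, 3, 4} : Finset (Fin 7)), ({6, 0, 2, 4} : Finset (Fin 7)), ({6, 0, 2, 3} : Finset (Fin 7)), ({6, 5, 3, 4} : Finset (Fin 7)), ({6, 5, 2, 4} : Finset (Fin 7)), ({6, 5, 2, 3} : Finset (Fin 7))]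

def mW : Fin 13 → Finset (LVec 4) := fun k => (mW0 k).image vU

def maxW : Finset (Finset (LVec 4)) := Finset.image mW Finset.univ

def gW : Fin 13 → Fin 4 → LVec 4 := ![![![(-1 : ℤ), -1, -1, -1], ![(1 : ℤ), 0, 0, 0], ![(0 : ℤ), 0, 1, 0], ![(0 : ℤ), 0, 0, 1]], ![![(-1 : ℤ), -1, -1, -1], ![(1 : ℤ), 0, 0, 0], ![(0 : ℤ), 1, 0, 0], ![(0 : ℤ), 0, 0, 1]], ![![(1 : ℤ), 1, 1, 0], ![(1 : ℤ), 0, 0, 0], ![(0 : ℤ), 0, 1, 0], ![(0 : ℤ), 0, 0, 1]], ![![(1 : ℤ), 1, 1, 0], ![(1 : ℤ), 0, 0, 0], ![(0 : ℤ), 1, 0, 0], ![(0 : ℤ), 0, 0, 1]], ![![(1 : ℤ), 1, 1, 0], ![(-1 : ℤ), -1, -1, -1], ![(0 : ℤ), 1, 0, 0], ![(0 : ℤ), 0, 1, 0]], ![![(1 : ℤ), 1, 1, 0], ![(-1 : ℤ), -1, -1, -1], ![(1 : ℤ), 0, 0, 0], ![(0 : ℤ), 0, 1, 0]], ![![(1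 : ℤ), 1, 1, 0], ![(-1 : ℤ), -1, -1, -1], ![(1 : ℤ), 0, 0, 0], ![(0 : ℤ), 1, 0, 0]], ![![(0 : ℤ), 1, 1, 1], ![(-1 : ℤ), -1, -1, -1], ![(0 : ℤ), 0, 1, 0], ![(0 : ℤ), 0, 0, 1]], ![![(0 : ℤ), 1, 1, 1], ![(-1 : ℤ), -1, -1, -1], ![(0 : ℤ), 1, 0, 0], ![(0 : ℤ), 0, 0, 1]], ![![(0 : ℤ), 1, 1, 1], ![(-1 : ℤ), -1, -1, -1], ![(0 : ℤ), 1, 0, 0], ![(0 : ℤ), 0, 1, 0]], ![![(0 : ℤ), 1, 1, 1], ![(1 : ℤ), 1, 1, 0], ![(0 : ℤ), 0, 1, 0], ![(0 : ℤ), 0, 0, 1]], ![![(0 : ℤ), 1, 1, 1], ![(1 : ℤ), 1, 1, 0], ![(0 : ℤ), 1, 0, 0], ![(0 : ℤ), 0, 0, 1]], ![![(0 : ℤ), 1, 1, 1], ![(1 : ℤ), 1, 1, 0], ![(0 : ℤ), 1, 0, 0], ![(0 : ℤ), 0, 1, 0]]]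

def dW : Fin 13 → Fin 4 → LVec 4 := ![![![(0 : ℤ), -1, 0, 0], ![(1 : ℤ), -1, 0, 0], ![(0 : ℤ), -1, 1, 0], ![(0 : ℤ), -1, 0, 1]], ![![(0 : ℤ), 0, -1, 0], ![(1 : ℤ), 0, -1, 0], ![(0 : ℤ), 1, -1, 0], ![(0 : ℤ), 0, -1, 1]], ![![(0 : ℤ), 1, 0, 0], ![(1 : ℤ), -1, 0, 0], ![(0 : ℤ), -1, 1, 0], ![(0 : ℤ), 0, 0, 1]], ![![(0 : ℤ), 0, 1, 0], ![(1 : ℤ), 0, -1, 0], ![(0 : ℤ), 1, -1, 0], ![(0 : ℤ), 0, 0, 1]], ![![(1 : ℤ), 0, 0, -1], ![(0 : ℤ), 0, 0, -1], ![(-1 : ℤ), 1, 0, 0], ![(-1 : ℤ), 0, 1, 0]], ![![(0 : ℤ), 1, 0, -1], ![(0 : ℤ), 0, 0, -1], ![(1 : ℤ), -1, 0, 0], ![(0 : ℤ), -1, 1, 0]], ![![(0 : ℤ), 0, 1, -1], ![(0 : ℤ), 0, 0, -1], ![(1 : ℤ), 0, -1, 0], ![(0 : ℤ), 1, -1, 0]],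 ![![(-1 : ℤ), 1, 0, 0], ![(-1 : ℤ), 0, 0, 0], ![(0 : ℤ), -1, 1, 0], ![(0 : ℤ), -1, 0, 1]], ![![(-1 : ℤ), 0, 1, 0], ![(-1 : ℤ), 0, 0, 0], ![(0 : ℤ), 1, -1, 0], ![(0 : ℤ), 0, -1, 1]], ![![(-1 : ℤ), 0, 0, 1], ![(-1 : ℤ), 0, 0, 0], ![(0 : ℤ), 1, 0, -1], ![(0 : ℤ), 0, 1, -1]], ![![(-1 : ℤ), 1, 0, 0], ![(1 : ℤ), 0, 0, 0], ![(0 : ℤ), -1, 1, 0], ![(1 : ℤ), -1, 0, 1]], ![![(-1 : ℤ), 0, 1, 0], ![(1 : ℤ), 0, 0, 0], ![(0 : ℤ), 1, -1, 0], ![(1 : ℤ), 0, -1, 1]], ![![(0 : ℤ), 0, 0, 1], ![(1 : ℤ), 0, 0, 0], ![(-1 : ℤ), 1, 0, -1], ![(-1 : ℤ), 0, 1, -1]]]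

def cdW : Fin 13 → CD := fun k => ⟨gW k, dW k⟩

lemma cdW_ok : ∀ k, (cdW k).ok := by decide

lemma cdW_M : ∀ k, (cdW k).M = mW k := by decide

def wtW : Fin 13 → Fin 7 → LVec 4 := ![![![(0 : ℤ), 1, 0, 0], ![(-1 : ℤ), 1, 0, 0], ![(0 : ℤ), -3, 0, 0], ![(0 : ℤ), 1, -1, 0], ![(0 : ℤ), 1, 0, -1], ![(0 : ℤ), -3, 0, 0], ![(0 : ℤ), -3, 0, 0]], ![![(0 : ℤ), 0, 1, 0], ![(-1 : ℤ), 0, 1, 0], ![(0 : ℤ), -1, 1, 0], ![(0 : ℤ), 0, -3, 0], ![(0 : ℤ), 0, 1, -1], ![(0 : ℤ), 0, -3, 0], ![(0 : ℤ), 0, -3, 0]], ![![(0 : ℤ), -3, 3, 1], ![(-1 : ℤ), 1, 0, 0], ![(0 : ℤ), -3, 3, 0], ![(0 : ℤ), 1, -1, 0], ![(0 : ℤ), 0, 0, -1], ![(0 : ℤ), -1, 0, 0], ![(1 : ℤ), -3, 2, 0]], ![![(0 : ℤ), 0, 0, 1], ![(-1 : ℤ), 0, 1, 0], ![(0 : ℤ),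 -1, 1, 0], ![(0 : ℤ), 1, -1, 0], ![(0 : ℤ), 0, 0, -1], ![(0 : ℤ), 0, -1, 0], ![(1 : ℤ), 0, -1, 0]], ![![(0 : ℤ), 0, 0, 1], ![(-3 : ℤ), 0, 3, -3], ![(1 : ℤ), -1, 0, 0], ![(1 : ℤ), 0, -1, 0], ![(-3 : ℤ), 0, 3, -3], ![(-1 : ℤ), 0, 0, 1], ![(-2 : ℤ), 0, 2, -3]], ![![(0 : ℤ), 0, 0, 1], ![(-1 : ℤ), 1, 0, 0], ![(0 : ℤ), -3, 3, -3], ![(0 : ℤ), 1, -1, 0], ![(0 : ℤ), -3, 3, -3], ![(0 : ℤ), -1, 0, 1], ![(0 : ℤ), -3, 3, -3]], ![![(0 : ℤ), 0, 0, 1], ![(-1 : ℤ), 0, 1, 0], ![(0 : ℤ), -1, 1, 0], ![(0 : ℤ), 1, -1, -3], ![(0 : ℤ), 0, 0, -3], ![(0 : ℤ), 0, -1, 1], ![(0 : ℤ), 0, 0, -3]], ![![(1 : ℤ), 0, 0, 0], ![(-3 : ℤ), -3, 0, 3], ![(-3 : ℤ), -3, 0, 3], ![(0 : ℤ), 1,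 -1, 0], ![(0 : ℤ), 1, 0, -1], ![(-3 : ℤ), -3, 0, 3], ![(1 : ℤ), -1, 0, 0]], ![![(1 : ℤ), 0, 0, 0], ![(-3 : ℤ), 0, -3, 3], ![(0 : ℤ), -1, 1, 0], ![(-3 : ℤ), 0, -3, 3], ![(0 : ℤ), 0, 1, -1], ![(-3 : ℤ), 0, -3, 3], ![(1 : ℤ), 0, -1, 0]], ![![(1 : ℤ), 0, 0, 0], ![(-3 : ℤ), 0, 0, 0], ![(0 : ℤ), -1, 0, 1], ![(0 : ℤ), 0, -1, 1], ![(-3 : ℤ), 0, 1, -1], ![(-3 : ℤ), 0, 0, 0], ![(1 : ℤ), 0, 0, -1]], ![![(-3 : ℤ), 0, 3, 1], ![(-3 : ℤ), 0, 3, 0], ![(-2 : ℤ), -1, 3, 0], ![(0 : ℤ), 1, -1, 0], ![(-1 : ℤ), 1, 0, -1], ![(-1 : ℤ), 0, 0, 0], ![(1 : ℤ), -1, 0, 0]], ![![(-3 : ℤ), 0, 3, 1], ![(-3 : ℤ), 0, 3, 0], ![(0 : ℤ), -1, 1, 0], ![(-2 : ℤ), 3, -1, 0], ![(-1 : ℤ),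 0, 1, -1], ![(-1 : ℤ), 0, 0, 0], ![(1 : ℤ), 0, -1, 0]], ![![(-3 : ℤ), 0, 3, 1], ![(-3 : ℤ), 0, 3, -3], ![(1 : ℤ), -1, 0, 1], ![(1 : ℤ), 0, -1, 1], ![(-3 : ℤ), 0, 3, -3], ![(-1 : ℤ), 0, 0, 0], ![(0 : ℤ), 0, 0, -1]]]

lemma wtW_ok : ∀ (k : Fin 13), ∀ l ∈ ({0, 1, 2, 3, 4, 5, 6} : Finset (Fin 7)), (∀ s ∈ mW k, s ≠ vU l → 0 ≤ idot (wtW k l) s) ∧ idot (wtW k l) (vU l) < 0 := by decide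

def sepW : Fin 13 → Fin 13 → LVec 4 := ![![![(0 : ℤ), 0, 0, 0], ![(0 : ℤ), -3, 3, 0], ![(0 : ℤ), -3, 0, 0], ![(0 : ℤ), -3, 1, 0], ![(1 : ℤ), -3, 0, 2], ![(0 : ℤ), -3, 0, 3], ![(0 : ℤ), -3, 1, 2], ![(1 : ℤ), -1, 0, 0], ![(1 : ℤ), -3, 2, 0], ![(1 : ℤ), -3, 0, 2], ![(1 : ℤ), -3, 0, 0], ![(1 : ℤ), -3, 1, 0], ![(1 : ℤ), -3, 0, 1]], ![![(0 : ℤ), 3, -3, 0], ![(0 : ℤ), 0, 0, 0], ![(0 : ℤ), 1, -3, 0], ![(0 : ℤ), 0, -3, 0], ![(1 : ℤ), 0, -3, 2], ![(0 : ℤ), 1, -3, 2], ![(0 : ℤ), 0, -3, 3], ![(1 : ℤ), 1, -2, 0], ![(1 : ℤ), 0, -1, 0], ![(1 : ℤ), 0, -3, 2], ![(1 : ℤ), 1, -3, 0], ![(1 : ℤ), 0, -3, 0], ![(1 : ℤ), 0, -3, 1]], ![![(0 : ℤ), 3, 0, 0], ![(0 : ℤ), -1, 3, 0], ![(0 : ℤ),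 0, 0, 0], ![(0 : ℤ), -3, 3, 0], ![(1 : ℤ), -1, 0, 1], ![(0 : ℤ), 0, 0, 1], ![(0 : ℤ), -3, 3, 1], ![(2 : ℤ), -1, 0, 0], ![(2 : ℤ), -3, 2, 0], ![(3 : ℤ), -2, 0, 1], ![(1 : ℤ), -1, 0, 0], ![(1 : ℤ), -3, 2, 0], ![(2 : ℤ), -2, 0, 1]], ![![(0 : ℤ), 3, -1, 0], ![(0 : ℤ), 0, 3, 0], ![(0 : ℤ), 3, -3, 0], ![(0 : ℤ), 0, 0, 0], ![(1 : ℤ), 0, -1, 1], ![(0 : ℤ), 1, -1, 1], ![(0 : ℤ), 0, 0, 1], ![(2 : ℤ), 1, -2, 0], ![(2 : ℤ), 0, -1, 0], ![(3 : ℤ), 0, -2, 1], ![(1 : ℤ), 1, -2, 0], ![(1 : ℤ), 0, -1, 0], ![(2 : ℤ), 0, -2, 1]], ![![(-1 : ℤ), 3, 0, -2], ![(-1 : ℤ), 0, 3, -2], ![(-1 : ℤ), 1, 0, -1], ![(-1 : ℤ), 0, 1, -1], ![(0 : ℤ), 0, 0, 0], ![(-3 : ℤ), 3, 0, 0], ![(-3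 : ℤ), 0, 3, 0], ![(1 : ℤ), 1, 0, -2], ![(1 : ℤ), 0, 1, -2], ![(1 : ℤ), 0, 0, -1], ![(-2 : ℤ), 2, 0, -3], ![(-2 : ℤ), 0, 2, -3], ![(0 : ℤ), 0, 0, -3]], ![![(0 : ℤ), 3, 0, -3], ![(0 : ℤ), -1, 3, -2], ![(0 : ℤ), 0, 0, -1], ![(0 : ℤ), -1, 1, -1], ![(3 : ℤ), -3, 0, 0], ![(0 : ℤ), 0, 0, 0], ![(0 : ℤ), -3, 3, 0], ![(1 : ℤ), 0, 0, -1], ![(1 : ℤ), -3, 3, -1], ![(2 : ℤ), -1, 0, -1], ![(1 : ℤ), -1, 0, -3], ![(1 : ℤ), -3, 2, -3], ![(1 : ℤ), -1, 0, -3]], ![![(0 : ℤ), 3, -1, -2], ![(0 : ℤ), 0, 3, -3], ![(0 : ℤ), 3, -3, -1], ![(0 : ℤ), 0, 0, -1], ![(3 : ℤ), 0, -3, 0], ![(0 : ℤ), 3, -3, 0], ![(0 : ℤ), 0, 0, 0], ![(1 : ℤ), 1, -1, -1], ![(1 : ℤ), 0, 0, -1], ![(2 : ℤ), 0, -1, -1],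 ![(1 : ℤ), 1, -2, -3], ![(1 : ℤ), 0, -1, -3], ![(1 : ℤ), 0, -1, -3]], ![![(-1 : ℤ), 1, 0, 0], ![(-1 : ℤ), -1, 2, 0], ![(-2 : ℤ), 1, 0, 0], ![(-2 : ℤ), -1, 2, 0], ![(-1 : ℤ), -1, 0, 2], ![(-1 : ℤ), 0, 0, 1], ![(-1 : ℤ), -1, 1, 1], ![(0 : ℤ), 0, 0, 0], ![(0 : ℤ), -3, 3, 0], ![(0 : ℤ), -3, 0, 3], ![(-3 : ℤ), 0, 0, 0], ![(-3 : ℤ), -3, 3, 0], ![(-3 : ℤ), -3, 0, 3]], ![![(-1 : ℤ), 3, -2, 0], ![(-1 : ℤ), 0, 1, 0], ![(-2 : ℤ), 3, -2, 0], ![(-2 : ℤ), 0, 1, 0], ![(-1 : ℤ), 0, -1, 2], ![(-1 : ℤ), 3, -3, 1], ![(-1 : ℤ), 0, 0, 1], ![(0 : ℤ), 3, -3, 0], ![(0 : ℤ), 0, 0, 0], ![(0 : ℤ), 0, -3, 3], ![(-3 : ℤ), 1, -1, 0], ![(-3 : ℤ), 0, 0, 0], ![(-3 : ℤ), 0, -3,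 3]], ![![(-1 : ℤ), 3, 0, -2], ![(-1 : ℤ), 0, 3, -2], ![(-3 : ℤ), 2, 0, -1], ![(-3 : ℤ), 0, 2, -1], ![(-1 : ℤ), 0, 0, 1], ![(-2 : ℤ), 1, 0, 1], ![(-2 : ℤ), 0, 1, 1], ![(0 : ℤ), 3, 0, -3], ![(0 : ℤ), 0, 3, -3], ![(0 : ℤ), 0, 0, 0], ![(-3 : ℤ), 1, 0, -1], ![(-3 : ℤ), 0, 1, -1], ![(-3 : ℤ), 0, 0, 0]], ![![(-1 : ℤ), 3, 0, 0], ![(-1 : ℤ), -1, 3, 0], ![(-1 : ℤ), 1, 0, 0], ![(-1 : ℤ), -1, 2, 0], ![(2 : ℤ), -2, 0, 3], ![(-1 : ℤ), 1, 0, 3], ![(-1 : ℤ), -1, 2, 3], ![(3 : ℤ), 0, 0, 0], ![(3 : ℤ), -1, 1, 0], ![(3 : ℤ), -1, 0, 1], ![(0 : ℤ), 0, 0, 0], ![(0 : ℤ), -3, 3, 0], ![(1 : ℤ), -1, 0, 1]], ![![(-1 : ℤ), 3, -1, 0], ![(-1 : ℤ), 0, 3, 0], ![(-1 : ℤ), 3,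 -2, 0], ![(-1 : ℤ), 0, 1, 0], ![(2 : ℤ), 0, -2, 3], ![(-1 : ℤ), 3, -2, 3], ![(-1 : ℤ), 0, 1, 3], ![(3 : ℤ), 3, -3, 0], ![(3 : ℤ), 0, 0, 0], ![(3 : ℤ), 0, -1, 1], ![(0 : ℤ), 3, -3, 0], ![(0 : ℤ), 0, 0, 0], ![(1 : ℤ), 0, -1, 1]], ![![(-1 : ℤ), 3, 0, -1], ![(-1 : ℤ), 0, 3, -1], ![(-2 : ℤ), 2, 0, -1], ![(-2 : ℤ), 0, 2, -1], ![(0 : ℤ), 0, 0, 3], ![(-1 : ℤ), 1, 0, 3], ![(-1 : ℤ), 0, 1, 3], ![(3 : ℤ), 3, 0, -3], ![(3 : ℤ), 0, 3, -3], ![(3 : ℤ), 0, 0, 0], ![(-1 : ℤ), 1, 0, -1], ![(-1 : ℤ), 0, 1, -1], ![(0 : ℤ), 0, 0, 0]]]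

lemma sepW_ok : ∀ (k l : Fin 13),
    (∀ v ∈ mW k, 0 ≤ idot (sepW k l) v) ∧ (∀ v ∈ mW l, idot (sepW k l) v ≤ 0) ∧
    ((mW k).filter (fun v => idot (sepW k l) v = 0) = mW k ∩ mW l) ∧
    ((mW l).filter (fun v => idot (sepW k l) v = 0) = mW k ∩ mW l) := by decide

end Aux

namespace Aux
open Finset

lemma ray_out_cert {M B : Finset (LVec 4)} (hB : B ⊆ M) {v w : LVec 4}
    (h1 : ∀ s ∈ M, s ≠ v → 0 ≤ idot w s) (h2 : idot w v < 0) (hvB : v ∉ B) :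
    toQ v ∉ cn B :=
  notMem_of_cert (fun s hs => h1 s (hB hs) (fun h => hvB (h ▸ hs))) h2

lemma isPrimitive_of_coord {v : LVec 4} (i : Fin 4) (h : v i = 1 ∨ v i = -1) :
    IsPrimitive v := by
  constructor
  · intro h0
    rw [h0] at h
    simp only [Pi.zero_apply] at h
    rcases h with h | h <;> norm_num at h
  · intro k w hkw
    have hv : v i = k * w i := by rw [hkw]; rfl
    rcases h with h | h
    · exact IsUnit.of_mul_eq_one (a := k) (w i) (by rw [← hv, h])
    · refine IsUnit.of_mul_eq_one (a := k) (-(w i)) ?_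
      rw [mul_neg, ← hv, h]
      norm_num

lemma prim_vU : ∀ l : Fin 7, IsPrimitive (vU l) := by
  intro l
  fin_cases l
  · exact isPrimitive_of_coord 0 (Or.inr (by decide))
  · exact isPrimitive_of_coord 0 (Or.inl (by decide))
  · exact isPrimitive_of_coord 1 (Or.inl (by decide))
  · exact isPrimitive_of_coord 2 (Or.inl (by decide))
  · exact isPrimitive_of_coord 3 (Or.inl (by decide))
  · exact isPrimitive_of_coord 0 (Or.inl (by decide))
  · exact isPrimitive_of_coord 1 (Or.inl (by decide))

lemma subset_image_vU {B : Finset (LVec 4)} {I : Finset (Fin 7)} (h : B ⊆ I.image vU) :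
    ∃ B0, B0 ⊆ I ∧ B = B0.image vU := by
  classical
  refine ⟨I.filter (fun l => vU l ∈ B), Finset.filter_subset _ _, ?_⟩
  ext v
  constructor
  · intro hv
    obtain ⟨l, hl, rfl⟩ := Finset.mem_image.mp (h hv)
    exact Finset.mem_image_of_mem _ (Finset.mem_filter.mpr ⟨hl, hv⟩)
  · intro hv
    obtain ⟨l, hlf, rfl⟩ := Finset.mem_image.mp hv
    exact (Finset.mem_filter.mp hlf).2

theorem starSubdiv_Fam_idx {n m : ℕ}
    (mF0 : Fin n → Finset (Fin 7)) (mF0' : Fin m → Finset (Fin 7))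
    (T0 : Finset (Fin 7)) (x0 : Fin 7)
    (hsum : ∑ t ∈ T0.image vU, t = vU x0)
    (cd : Fin n → CD) (hcd : ∀ k, (cd k).ok)
    (hcdM : ∀ k, (cd k).M = (mF0 k).image vU)
    (wt : Fin n → Fin 7 → LVec 4)
    (hwt : ∀ (k : Fin n), ∀ l ∈ T0,
      (∀ s ∈ (mF0 k).image vU, s ≠ vU l → 0 ≤ idot (wt k l) s) ∧ idot (wt k l) (vU l) < 0)
    (hkeep0 : ∀ (k : Fin n), ∀ B0 : Finset (Fin 7), B0 ⊆ mF0 k → ¬ T0 ⊆ B0 →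
      ∃ k', B0 ⊆ mF0' k')
    (hnew0 : ∀ (k : Fin n), T0 ⊆ mF0 k → ∀ B0 : Finset (Fin 7), B0 ⊆ mF0 k → ¬ T0 ⊆ B0 →
      ∃ k', insert x0 B0 ⊆ mF0' k')
    (hback_old0 : ∀ (k' : Fin m), ∀ B0 : Finset (Fin 7), B0 ⊆ mF0' k' → x0 ∉ B0 →
      (∃ k, B0 ⊆ mF0 k) ∧ ¬ T0 ⊆ B0)
    (hback_new0 : ∀ (k' : Fin m), ∀ B0 : Finset (Fin 7), B0 ⊆ mF0' k' → x0 ∈ B0 →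
      ∃ k, T0 ⊆ mF0 k ∧ B0.erase x0 ⊆ mF0 k ∧ ¬ T0 ⊆ B0.erase x0) :
    starSubdiv (Fam (Finset.image (fun k => (mF0 k).image vU) Finset.univ)) (T0.image vU)
      = Fam (Finset.image (fun k => (mF0' k).image vU) Finset.univ) := by
  apply starSubdiv_Fam _ _ _ (vU x0) hsum
  · -- hray
    rintro M hM B hB t ht hm
    obtain ⟨k, -, rfl⟩ := Finset.mem_image.mp hM
    obtain ⟨l, hl, rfl⟩ := Finset.mem_image.mp ht
    by_contra hvB
    exact ray_out_cert hB (hwt k l hl).1 (hwt k l hl).2 hvB hm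
  · -- hprim
    rintro M hM v hv
    obtain ⟨k, -, rfl⟩ := Finset.mem_image.mp hM
    obtain ⟨l, -, rfl⟩ := Finset.mem_image.mp hv
    exact prim_vU l
  · -- hface
    rintro M hM A hA
    obtain ⟨k, -, rfl⟩ := Finset.mem_image.mp hM
    have hA' : A ⊆ (cd k).M := by rw [hcdM k]; exact hA
    have := CD.isFaceOf_sub (hcd k) hA' (subset_refl _)
    rwa [hcdM k] at this
  · -- hkeep
    rintro M hM B hB hTB
    obtain ⟨k, -, rfl⟩ := Finset.mem_image.mp hM
    obtain ⟨B0, hB0, rfl⟩ := subset_image_vU hB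
    have hT0B0 : ¬ T0 ⊆ B0 := fun h => hTB (Finset.image_subset_image h)
    obtain ⟨k', hk'⟩ := hkeep0 k B0 hB0 hT0B0
    exact ⟨_, Finset.mem_image_of_mem _ (Finset.mem_univ k'), Finset.image_subset_image hk'⟩
  · -- hnew
    rintro M hM hTM B hB hTB
    obtain ⟨k, -, rfl⟩ := Finset.mem_image.mp hM
    obtain ⟨B0, hB0, rfl⟩ := subset_image_vU hB
    have hT0 : T0 ⊆ mF0 k := (Finset.image_subset_image_iff vU_inj).mp hTM
    have hT0B0 : ¬ T0 ⊆ B0 := fun h => hTB (Finset.image_subset_image h)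
    obtain ⟨k', hk'⟩ := hnew0 k hT0 B0 hB0 hT0B0
    refine ⟨_, Finset.mem_image_of_mem _ (Finset.mem_univ k'), ?_⟩
    rw [← Finset.image_insert]
    exact Finset.image_subset_image hk'
  · -- hback_old
    rintro M' hM' B hB hxB
    obtain ⟨k', -, rfl⟩ := Finset.mem_image.mp hM'
    obtain ⟨B0, hB0, rfl⟩ := subset_image_vU hB
    have hx0 : x0 ∉ B0 := fun h => hxB (Finset.mem_image_of_mem _ h)
    obtain ⟨⟨k, hk⟩, hT0B0⟩ := hback_old0 k' B0 hB0 hx0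
    refine ⟨⟨_, Finset.mem_image_of_mem _ (Finset.mem_univ k), Finset.image_subset_image hk⟩, ?_⟩
    exact fun h => hT0B0 ((Finset.image_subset_image_iff vU_inj).mp h)
  · -- hback_new
    rintro M' hM' B hB hxB
    obtain ⟨k', -, rfl⟩ := Finset.mem_image.mp hM'
    obtain ⟨B0, hB0, rfl⟩ := subset_image_vU hB
    have hx0 : x0 ∈ B0 := by
      obtain ⟨l, hl, heq⟩ := Finset.mem_image.mp hxB
      rwa [vU_inj heq] at hl
    obtain ⟨k, hT0, herase, hT0e⟩ := hback_new0 k' B0 hB0 hx0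
    refine ⟨_, Finset.mem_image_of_mem _ (Finset.mem_univ k),
      Finset.image_subset_image hT0, ?_, ?_⟩
    · rw [← Finset.image_erase vU_inj]
      exact Finset.image_subset_image herase
    · rw [← Finset.image_erase vU_inj]
      exact fun h => hT0e ((Finset.image_subset_image_iff vU_inj).mp h)

/-! index-level combinatorial facts for the two star subdivisions -/

lemma keep1 : ∀ (k : Fin 5), ∀ B0 : Finset (Fin 7), B0 ⊆ mP0 k →
    ¬ ({1,2,3} : Finset (Fin 7)) ⊆ B0 → ∃ k' : Fin 9, B0 ⊆ mX0 k' := by decide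

lemma new1 : ∀ (k : Fin 5), ({1,2,3} : Finset (Fin 7)) ⊆ mP0 k →
    ∀ B0 : Finset (Fin 7), B0 ⊆ mP0 k → ¬ ({1,2,3} : Finset (Fin 7)) ⊆ B0 →
    ∃ k' : Fin 9, insert 5 B0 ⊆ mX0 k' := by decide

lemma back_old1 : ∀ (k' : Fin 9), ∀ B0 : Finset (Fin 7), B0 ⊆ mX0 k' → (5 : Fin 7) ∉ B0 →
    (∃ k : Fin 5, B0 ⊆ mP0 k) ∧ ¬ ({1,2,3} : Finset (Fin 7)) ⊆ B0 := by decide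

lemma back_new1 : ∀ (k' : Fin 9), ∀ B0 : Finset (Fin 7), B0 ⊆ mX0 k' → (5 : Fin 7) ∈ B0 →
    ∃ k : Fin 5, ({1,2,3} : Finset (Fin 7)) ⊆ mP0 k ∧ B0.erase 5 ⊆ mP0 k ∧
      ¬ ({1,2,3} : Finset (Fin 7)) ⊆ B0.erase 5 := by decide

lemma keep2 : ∀ (k : Fin 9), ∀ B0 : Finset (Fin 7), B0 ⊆ mX0 k →
    ¬ ({2,3,4} : Finset (Fin 7)) ⊆ B0 → ∃ k' : Fin 13, B0 ⊆ mW0 k' := by decide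

lemma new2 : ∀ (k : Fin 9), ({2,3,4} : Finset (Fin 7)) ⊆ mX0 k →
    ∀ B0 : Finset (Fin 7), B0 ⊆ mX0 k → ¬ ({2,3,4} : Finset (Fin 7)) ⊆ B0 →
    ∃ k' : Fin 13, insert 6 B0 ⊆ mW0 k' := by decide

lemma back_old2 : ∀ (k' : Fin 13), ∀ B0 : Finset (Fin 7), B0 ⊆ mW0 k' → (6 : Fin 7) ∉ B0 →
    (∃ k : Fin 9, B0 ⊆ mX0 k) ∧ ¬ ({2,3,4} : Finset (Fin 7)) ⊆ B0 := by decide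

lemma back_new2 : ∀ (k' : Fin 13), ∀ B0 : Finset (Fin 7), B0 ⊆ mW0 k' → (6 : Fin 7) ∈ B0 →
    ∃ k : Fin 9, ({2,3,4} : Finset (Fin 7)) ⊆ mX0 k ∧ B0.erase 6 ⊆ mX0 k ∧
      ¬ ({2,3,4} : Finset (Fin 7)) ⊆ B0.erase 6 := by decide

lemma hsum1 : ∑ t ∈ ({1,2,3} : Finset (Fin 7)).image vU, t = vU 5 := by decide
lemma hsum2 : ∑ t ∈ ({2,3,4} : Finset (Fin 7)).image vU, t = vU 6 := by decide
lemma hT1 : ({e1, e2, e3} : Finset (LVec 4)) = ({1,2,3} : Finset (Fin 7)).image vU := by decide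
lemma hT2 : ({e2, e3, e4} : Finset (LVec 4)) = ({2,3,4} : Finset (Fin 7)).image vU := by decide

lemma SigmaP4_eq : SigmaP4 = Fam maxP := by
  have hchar : ∀ S : Finset (LVec 4), S ⊂ ({e0, e1, e2, e3, e4} : Finset (LVec 4)) ↔
      ∃ M ∈ maxP, S ⊆ M := by
    intro S
    constructor
    · intro hS
      obtain ⟨a, haU, haS⟩ := Finset.exists_of_ssubset hS
      have herase : S ⊆ ({e0, e1, e2, e3, e4} : Finset (LVec 4)).erase a := by
        intro s hs
        exact Finset.mem_erase.mpr ⟨fun h => haS (h ▸ hs), hS.subset hs⟩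
      have hex : ∀ a ∈ ({e0, e1, e2, e3, e4} : Finset (LVec 4)),
          ∃ k : Fin 5, ({e0, e1, e2, e3, e4} : Finset (LVec 4)).erase a ⊆ mP k := by decide
      obtain ⟨k, hk⟩ := hex a haU
      exact ⟨mP k, Finset.mem_image_of_mem _ (Finset.mem_univ k), herase.trans hk⟩
    · rintro ⟨M, hM, hSM⟩
      obtain ⟨k, -, rfl⟩ := Finset.mem_image.mp hM
      have hss : ∀ k : Fin 5, mP k ⊂ ({e0, e1, e2, e3, e4} : Finset (LVec 4)) := by decide
      exact Finset.ssubset_of_subset_of_ssubset hSM (hss k)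
  ext σ
  constructor
  · rintro ⟨S, hS, rfl⟩
    exact ⟨S, (hchar S).mp hS, rfl⟩
  · rintro ⟨B, hB, rfl⟩
    exact ⟨B, (hchar B).mpr hB, rfl⟩

lemma SigmaX_eq : SigmaX = Fam maxX := by
  show starSubdiv SigmaP4 {e1, e2, e3} = Fam maxX
  rw [SigmaP4_eq, hT1]
  exact starSubdiv_Fam_idx mP0 mX0 {1,2,3} 5 hsum1 cdP cdP_ok cdP_M wtP wtP_ok
    keep1 new1 back_old1 back_new1

lemma SigmaW_eq : SigmaW = Fam maxW := by
  show starSubdiv SigmaX {e2, e3, e4} = Fam maxW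
  rw [SigmaX_eq, hT2]
  exact starSubdiv_Fam_idx mX0 mW0 {2,3,4} 6 hsum2 cdX cdX_ok cdX_M wtX wtX_ok
    keep2 new2 back_old2 back_new2

end Aux

namespace Aux
open Finset

lemma covers_W : ⋃₀ Fam maxW = Set.univ := by
  apply Set.eq_univ_of_forall
  intro x
  have key : ∀ (k : Fin 13) (v1 v2 v3 v4 : LVec 4), v1 ∈ mW k → v2 ∈ mW k →
      v3 ∈ mW k → v4 ∈ mW k → ∀ (q1 q2 q3 q4 : ℚ), 0 ≤ q1 → 0 ≤ q2 → 0 ≤ q3 → 0 ≤ q4 →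
      x 0 = q1 * toQ v1 0 + q2 * toQ v2 0 + q3 * toQ v3 0 + q4 * toQ v4 0 →
      x 1 = q1 * toQ v1 1 + q2 * toQ v2 1 + q3 * toQ v3 1 + q4 * toQ v4 1 →
      x 2 = q1 * toQ v1 2 + q2 * toQ v2 2 + q3 * toQ v3 2 + q4 * toQ v4 2 →
      x 3 = q1 * toQ v1 3 + q2 * toQ v2 3 + q3 * toQ v3 3 + q4 * toQ v4 3 →
      x ∈ ⋃₀ Fam maxW := by
    intro k v1 v2 v3 v4 hm1 hm2 hm3 hm4 q1 q2 q3 q4 hq1 hq2 hq3 hq4 hi0 hi1 hi2 hi3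
    refine Set.mem_sUnion.mpr ⟨cn (mW k),
      mem_Fam (Finset.mem_image_of_mem _ (Finset.mem_univ k)) (subset_refl _), ?_⟩
    have hxe : x = q1 • toQ v1 + q2 • toQ v2 + q3 • toQ v3 + q4 • toQ v4 := by
      funext j
      fin_cases j
      · exact hi0
      · exact hi1
      · exact hi2
      · exact hi3
    rw [hxe]
    exact add_mem_coneGen (add_mem_coneGen (add_mem_coneGen
      (smul_mem_coneGen hq1 (mem_cn_self hm1)) (smul_mem_coneGen hq2 (mem_cn_self hm2)))
      (smul_mem_coneGen hq3 (mem_cn_self hm3))) (smul_mem_coneGen hq4 (mem_cn_self hm4))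
  rcases le_total (x 0) (x 1) with hc1 | hc1
  · rcases le_total (x 0) (x 2) with hc2 | hc2
    · rcases le_total (x 0) (x 3) with hc3 | hc3
      · rcases le_total ((0:ℚ)) (x 0) with hc4 | hc4
        · rcases le_total (x 1) (x 2) with hc5 | hc5
          · rcases le_total (x 1 - x 0) (x 3) with hc6 | hc6
            · exact key 10 e6 e5 e3 e4 (by decide) (by decide) (by decide) (by decide) (-x 0 + x 1) (x 0) (-x 1 + x 2) (x 0 - x 1 + x 3) (by linarith) (by linarith) (by linarith) (by linarith) (by simp [toQ, e0, e1, e2, e3, e4, e5, e6]; try ring; try linarith) (by simp [toQ, e0, e1, e2, e3, e4, e5, e6]; try ring; try linarith) (by simp [toQ, e0, e1, e2, e3, e4, e5, e6]; try ring; try linarith) (by simp [toQ, e0, e1, e2, e3, e4, e5, e6]; try ring; try linarith)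
            · exact key 12 e6 e5 e2 e3 (by decide) (by decide) (by decide) (by decide) (x 3) (x 0) (-x 0 + x 1 - x 3) (-x 0 + x 2 - x 3) (by linarith) (by linarith) (by linarith) (by linarith) (by simp [toQ, e0, e1, e2, e3, e4, e5, e6]; try ring; try linarith) (by simp [toQ, e0, e1, e2, e3, e4, e5, e6]; try ring; try linarith) (by simp [toQ, e0, e1, e2, e3, e4, e5, e6]; try ring; try linarith) (by simp [toQ, e0, e1, e2, e3, e4, e5, e6]; try ring; try linarith)
          · rcases le_total (x 2 - x 0) (x 3) with hc7 | hc7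
            · exact key 11 e6 e5 e2 e4 (by decide) (by decide) (by decide) (by decide) (-x 0 + x 2) (x 0) (x 1 - x 2) (x 0 - x 2 + x 3) (by linarith) (by linarith) (by linarith) (by linarith) (by simp [toQ, e0, e1, e2, e3, e4, e5, e6]; try ring; try linarith) (by simp [toQ, e0, e1, e2, e3, e4, e5, e6]; try ring; try linarith) (by simp [toQ, e0, e1, e2, e3, e4, e5, e6]; try ring; try linarith) (by simp [toQ, e0, e1, e2, e3, e4, e5, e6]; try ring; try linarith)
            · exact key 12 e6 e5 e2 e3 (by decide) (by decide) (by decide) (by decide) (x 3) (x 0) (-x 0 + x 1 - x 3) (-x 0 + x 2 - x 3) (by linarith) (by linarith) (by linarith) (by linarith) (by simp [toQ, e0, e1, e2, e3, e4, e5, e6]; try ring; try linarith) (by simp [toQ, e0, e1, e2, e3, e4, e5, e6]; try ring; try linarith) (by simp [toQ, e0, e1, e2, e3, e4, e5, e6]; try ring; try linarith) (by simp [toQ, e0, e1, e2, e3, e4, e5, e6]; try ring; try linarith)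
        · rcases le_total (x 1) (x 2) with hc8 | hc8
          · rcases le_total (x 1) (x 3) with hc9 | hc9
            · exact key 7 e6 e0 e3 e4 (by decide) (by decide) (by decide) (by decide) (-x 0 + x 1) (-x 0) (-x 1 + x 2) (-x 1 + x 3) (by linarith) (by linarith) (by linarith) (by linarith) (by simp [toQ, e0, e1, e2, e3, e4, e5, e6]; try ring; try linarith) (by simp [toQ, e0, e1, e2, e3, e4, e5, e6]; try ring; try linarith) (by simp [toQ, e0, e1, e2, e3, e4, e5, e6]; try ring; try linarith) (by simp [toQ, e0, e1, e2, e3, e4, e5, e6]; try ring; try linarith)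
            · exact key 9 e6 e0 e2 e3 (by decide) (by decide) (by decide) (by decide) (-x 0 + x 3) (-x 0) (x 1 - x 3) (x 2 - x 3) (by linarith) (by linarith) (by linarith) (by linarith) (by simp [toQ, e0, e1, e2, e3, e4, e5, e6]; try ring; try linarith) (by simp [toQ, e0, e1, e2, e3, e4, e5, e6]; try ring; try linarith) (by simp [toQ, e0, e1, e2, e3, e4, e5, e6]; try ring; try linarith) (by simp [toQ, e0, e1, e2, e3, e4, e5, e6]; try ring; try linarith)
          · rcases le_total (x 2) (x 3) with hc10 | hc10
            · exact key 8 e6 e0 e2 e4 (by decide) (by decide) (by decide) (by decide) (-x 0 + x 2) (-x 0) (x 1 - x 2) (-x 2 + x 3) (by linarith) (by linarith) (by linarith) (by linarith) (by simp [toQ, e0, e1, e2, e3, e4, e5, e6]; try ring; try linarith) (by simp [toQ, e0, e1, e2, e3, e4, e5, e6]; try ring; try linarith) (by simp [toQ, e0, e1, e2, e3, e4, e5, e6]; try ring; try linarith) (by simp [toQ, e0, e1, e2, e3, e4, e5, e6]; try ring; try linarith)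
            · exact key 9 e6 e0 e2 e3 (by decide) (by decide) (by decide) (by decide) (-x 0 + x 3) (-x 0) (x 1 - x 3) (x 2 - x 3) (by linarith) (by linarith) (by linarith) (by linarith) (by simp [toQ, e0, e1, e2, e3, e4, e5, e6]; try ring; try linarith) (by simp [toQ, e0, e1, e2, e3, e4, e5, e6]; try ring; try linarith) (by simp [toQ, e0, e1, e2, e3, e4, e5, e6]; try ring; try linarith) (by simp [toQ, e0, e1, e2, e3, e4, e5, e6]; try ring; try linarith)
      · rcases le_total ((0:ℚ)) (x 3) with hc11 | hc11
        · rcases le_total (x 1) (x 2) with hc12 | hc12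
          · rcases le_total (x 1 - x 0) (x 3) with hc13 | hc13
            · exact key 10 e6 e5 e3 e4 (by decide) (by decide) (by decide) (by decide) (-x 0 + x 1) (x 0) (-x 1 + x 2) (x 0 - x 1 + x 3) (by linarith) (by linarith) (by linarith) (by linarith) (by simp [toQ, e0, e1, e2, e3, e4, e5, e6]; try ring; try linarith) (by simp [toQ, e0, e1, e2, e3, e4, e5, e6]; try ring; try linarith) (by simp [toQ, e0, e1, e2, e3, e4, e5, e6]; try ring; try linarith) (by simp [toQ, e0, e1, e2, e3, e4, e5, e6]; try ring; try linarith)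
            · exact key 12 e6 e5 e2 e3 (by decide) (by decide) (by decide) (by decide) (x 3) (x 0) (-x 0 + x 1 - x 3) (-x 0 + x 2 - x 3) (by linarith) (by linarith) (by linarith) (by linarith) (by simp [toQ, e0, e1, e2, e3, e4, e5, e6]; try ring; try linarith) (by simp [toQ, e0, e1, e2, e3, e4, e5, e6]; try ring; try linarith) (by simp [toQ, e0, e1, e2, e3, e4, e5, e6]; try ring; try linarith) (by simp [toQ, e0, e1, e2, e3, e4, e5, e6]; try ring; try linarith)
          · rcases le_total (x 2 - x 0) (x 3) with hc14 | hc14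
            · exact key 11 e6 e5 e2 e4 (by decide) (by decide) (by decide) (by decide) (-x 0 + x 2) (x 0) (x 1 - x 2) (x 0 - x 2 + x 3) (by linarith) (by linarith) (by linarith) (by linarith) (by simp [toQ, e0, e1, e2, e3, e4, e5, e6]; try ring; try linarith) (by simp [toQ, e0, e1, e2, e3, e4, e5, e6]; try ring; try linarith) (by simp [toQ, e0, e1, e2, e3, e4, e5, e6]; try ring; try linarith) (by simp [toQ, e0, e1, e2, e3, e4, e5, e6]; try ring; try linarith)
            · exact key 12 e6 e5 e2 e3 (by decide) (by decide) (by decide) (by decide) (x 3) (x 0) (-x 0 + x 1 - x 3) (-x 0 + x 2 - x 3) (by linarith) (by linarith) (by linarith) (by linarith) (by simp [toQ, e0, e1, e2, e3, e4, e5, e6]; try ring; try linarith) (by simp [toQ, e0, e1, e2, e3, e4, e5, e6]; try ring; try linarith) (by simp [toQ, e0, e1, e2, e3, e4, e5, e6]; try ring; try linarith) (by simp [toQ, e0, e1, e2, e3, e4, e5, e6]; try ring; try linarith)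
        · exact key 4 e5 e0 e2 e3 (by decide) (by decide) (by decide) (by decide) (x 0 - x 3) (-x 3) (-x 0 + x 1) (-x 0 + x 2) (by linarith) (by linarith) (by linarith) (by linarith) (by simp [toQ, e0, e1, e2, e3, e4, e5, e6]; try ring; try linarith) (by simp [toQ, e0, e1, e2, e3, e4, e5, e6]; try ring; try linarith) (by simp [toQ, e0, e1, e2, e3, e4, e5, e6]; try ring; try linarith) (by simp [toQ, e0, e1, e2, e3, e4, e5, e6]; try ring; try linarith)
    · rcases le_total (x 2) (x 3) with hc15 | hc15
      · rcases le_total ((0:ℚ)) (x 2) with hc16 | hc16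
        · exact key 3 e5 e1 e2 e4 (by decide) (by decide) (by decide) (by decide) (x 2) (x 0 - x 2) (x 1 - x 2) (x 3) (by linarith) (by linarith) (by linarith) (by linarith) (by simp [toQ, e0, e1, e2, e3, e4, e5, e6]; try ring; try linarith) (by simp [toQ, e0, e1, e2, e3, e4, e5, e6]; try ring; try linarith) (by simp [toQ, e0, e1, e2, e3, e4, e5, e6]; try ring; try linarith) (by simp [toQ, e0, e1, e2, e3, e4, e5, e6]; try ring; try linarith)
        · exact key 1 e0 e1 e2 e4 (by decide) (by decide) (by decide) (by decide) (-x 2) (x 0 - x 2) (x 1 - x 2) (-x 2 + x 3) (by linarith) (by linarith) (by linarith) (by linarith) (by simp [toQ, e0, e1, e2, e3, e4, e5, e6]; try ring; try linarith) (by simp [toQ, e0, e1, e2, e3, e4, e5, e6]; try ring; try linarith) (by simp [toQ, e0, e1, e2, e3, e4, e5, e6]; try ring; try linarith) (by simp [toQ, e0, e1, e2, e3, e4, e5, e6]; try ring; try linarith)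
      · rcases le_total ((0:ℚ)) (x 3) with hc17 | hc17
        · exact key 3 e5 e1 e2 e4 (by decide) (by decide) (by decide) (by decide) (x 2) (x 0 - x 2) (x 1 - x 2) (x 3) (by linarith) (by linarith) (by linarith) (by linarith) (by simp [toQ, e0, e1, e2, e3, e4, e5, e6]; try ring; try linarith) (by simp [toQ, e0, e1, e2, e3, e4, e5, e6]; try ring; try linarith) (by simp [toQ, e0, e1, e2, e3, e4, e5, e6]; try ring; try linarith) (by simp [toQ, e0, e1, e2, e3, e4, e5, e6]; try ring; try linarith)
        · exact key 6 e5 e0 e1 e2 (by decide) (by decide) (by decide) (by decide) (x 2 - x 3) (-x 3) (x 0 - x 2) (x 1 - x 2) (by linarith) (by linarith) (by linarith) (by linarith) (by simp [toQ, e0, e1, e2, e3, e4, e5, e6]; try ring; try linarith) (by simp [toQ, e0, e1, e2, e3, e4, e5, e6]; try ring; try linarith) (by simp [toQ, e0, e1, e2, e3, e4, e5, e6]; try ring; try linarith) (by simp [toQ, e0, e1, e2, e3, e4, e5, e6]; try ring; try linarith)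
  · rcases le_total (x 1) (x 2) with hc18 | hc18
    · rcases le_total (x 1) (x 3) with hc19 | hc19
      · rcases le_total ((0:ℚ)) (x 1) with hc20 | hc20
        · exact key 2 e5 e1 e3 e4 (by decide) (by decide) (by decide) (by decide) (x 1) (x 0 - x 1) (-x 1 + x 2) (x 3) (by linarith) (by linarith) (by linarith) (by linarith) (by simp [toQ, e0, e1, e2, e3, e4, e5, e6]; try ring; try linarith) (by simp [toQ, e0, e1, e2, e3, e4, e5, e6]; try ring; try linarith) (by simp [toQ, e0, e1, e2, e3, e4, e5, e6]; try ring; try linarith) (by simp [toQ, e0, e1, e2, e3, e4, e5, e6]; try ring; try linarith)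
        · exact key 0 e0 e1 e3 e4 (by decide) (by decide) (by decide) (by decide) (-x 1) (x 0 - x 1) (-x 1 + x 2) (-x 1 + x 3) (by linarith) (by linarith) (by linarith) (by linarith) (by simp [toQ, e0, e1, e2, e3, e4, e5, e6]; try ring; try linarith) (by simp [toQ, e0, e1, e2, e3, e4, e5, e6]; try ring; try linarith) (by simp [toQ, e0, e1, e2, e3, e4, e5, e6]; try ring; try linarith) (by simp [toQ, e0, e1, e2, e3, e4, e5, e6]; try ring; try linarith)
      · rcases le_total ((0:ℚ)) (x 3) with hc21 | hc21
        · exact key 2 e5 e1 e3 e4 (by decide) (by decide) (by decide) (by decide) (x 1) (x 0 - x 1) (-x 1 + x 2) (x 3) (by linarith) (by linarith) (by linarith) (by linarith) (by simp [toQ, e0, e1, e2, e3, e4, e5, e6]; try ring; try linarith) (by simp [toQ, e0, e1, e2, e3, e4, e5, e6]; try ring; try linarith) (by simp [toQ, e0, e1, e2, e3, e4, e5, e6]; try ring; try linarith) (by simp [toQ, e0, e1, e2, e3, e4, e5, e6]; try ring; try linarith)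
        · exact key 5 e5 e0 e1 e3 (by decide) (by decide) (by decide) (by decide) (x 1 - x 3) (-x 3) (x 0 - x 1) (-x 1 + x 2) (by linarith) (by linarith) (by linarith) (by linarith) (by simp [toQ, e0, e1, e2, e3, e4, e5, e6]; try ring; try linarith) (by simp [toQ, e0, e1, e2, e3, e4, e5, e6]; try ring; try linarith) (by simp [toQ, e0, e1, e2, e3, e4, e5, e6]; try ring; try linarith) (by simp [toQ, e0, e1, e2, e3, e4, e5, e6]; try ring; try linarith)
    · rcases le_total (x 2) (x 3) with hc22 | hc22
      · rcases le_total ((0:ℚ)) (x 2) with hc23 | hc23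
        · exact key 3 e5 e1 e2 e4 (by decide) (by decide) (by decide) (by decide) (x 2) (x 0 - x 2) (x 1 - x 2) (x 3) (by linarith) (by linarith) (by linarith) (by linarith) (by simp [toQ, e0, e1, e2, e3, e4, e5, e6]; try ring; try linarith) (by simp [toQ, e0, e1, e2, e3, e4, e5, e6]; try ring; try linarith) (by simp [toQ, e0, e1, e2, e3, e4, e5, e6]; try ring; try linarith) (by simp [toQ, e0, e1, e2, e3, e4, e5, e6]; try ring; try linarith)
        · exact key 1 e0 e1 e2 e4 (by decide) (by decide) (by decide) (by decide) (-x 2) (x 0 - x 2) (x 1 - x 2) (-x 2 + x 3) (by linarith) (by linarith) (by linarith) (by linarith) (by simp [toQ, e0, e1, e2, e3, e4, e5, e6]; try ring; try linarith) (by simp [toQ, e0, e1, e2, e3, e4, e5, e6]; try ring; try linarith) (by simp [toQ, e0, e1, e2, e3, e4, e5, e6]; try ring; try linarith) (by simp [toQ, e0, e1, e2, e3, e4, e5, e6]; try ring; try linarith)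
      · rcases le_total ((0:ℚ)) (x 3) with hc24 | hc24
        · exact key 3 e5 e1 e2 e4 (by decide) (by decide) (by decide) (by decide) (x 2) (x 0 - x 2) (x 1 - x 2) (x 3) (by linarith) (by linarith) (by linarith) (by linarith) (by simp [toQ, e0, e1, e2, e3, e4, e5, e6]; try ring; try linarith) (by simp [toQ, e0, e1, e2, e3, e4, e5, e6]; try ring; try linarith) (by simp [toQ, e0, e1, e2, e3, e4, e5, e6]; try ring; try linarith) (by simp [toQ, e0, e1, e2, e3, e4, e5, e6]; try ring; try linarith)
        · exact key 6 e5 e0 e1 e2 (by decide) (by decide) (by decide) (by decide) (x 2 - x 3) (-x 3) (x 0 - x 2) (x 1 - x 2) (by linarith) (by linarith) (by linarith) (by linarith) (by simp [toQ, e0, e1, e2, e3, e4, e5, e6]; try ring; try linarith) (by simp [toQ, e0, e1, e2, e3, e4, e5, e6]; try ring; try linarith) (by simp [toQ, e0, e1, e2, e3, e4, e5, e6]; try ring; try linarith) (by simp [toQ, e0, e1, e2, e3, e4, e5, e6]; try ring; try linarith)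

end Aux

namespace Aux
open Finset

lemma cn_empty : cn (∅ : Finset (LVec 4)) = {0} := by
  apply Set.Subset.antisymm
  · intro x hx
    obtain ⟨c, hc, rfl⟩ := mem_cn_iff.mp hx
    simp
  · intro x hx
    rw [Set.mem_singleton_iff] at hx
    rw [hx]
    exact zero_mem_coneGen _

lemma mem_cn_singleton {v : LVec 4} {x : Vec 4} :
    x ∈ cn {v} ↔ ∃ q : ℚ, 0 ≤ q ∧ x = q • toQ v := by
  rw [mem_cn_iff]
  constructor
  · rintro ⟨c, hc, rfl⟩
    exact ⟨c v, hc v, by rw [Finset.sum_singleton]⟩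
  · rintro ⟨q, hq, rfl⟩
    exact ⟨fun _ => q, fun _ => hq, by rw [Finset.sum_singleton]⟩

lemma cn_singleton (v : LVec 4) : coneGen {toQ v} = cn {v} := by
  unfold cn
  congr 1
  simp

lemma eq_of_primitive_smul {v b : LVec 4} (hv : IsPrimitive v) (hb : IsPrimitive b)
    {q : ℚ} (hq : 0 < q) (h : toQ v = q • toQ b) : v = b := by
  set m : ℤ := q.num with hm
  set n : ℤ := (q.den : ℤ) with hn
  have hnpos : 0 < n := by positivity
  have hmpos : 0 < m := Rat.num_pos.mpr hq
  have hden : ((q.den : ℚ)) ≠ 0 := by positivity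
  have hqeq : q = (m : ℚ) / (n : ℚ) := by
    rw [hm, hn]
    push_cast
    exact (Rat.num_div_den q).symm
  have hkey : ∀ i, n * v i = m * b i := by
    intro i
    have h1 : (v i : ℚ) = q * (b i : ℚ) := by
      have := congrFun h i
      simpa [toQ, Pi.smul_apply, smul_eq_mul] using this
    rw [hqeq] at h1
    have h2 : (n : ℚ) * (v i : ℚ) = (m : ℚ) * (b i : ℚ) := by
      rw [h1]
      field_simp
    exact_mod_cast h2
  have hcop : IsCoprime m n := by
    rw [Int.isCoprime_iff_gcd_eq_one]
    have : m.natAbs.gcd n.natAbs = 1 := by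
      rw [hm, hn]
      simpa [Int.natAbs_natCast] using q.reduced
    simpa [Int.gcd] using this
  obtain ⟨u, w, huw⟩ := hcop
  have hbn : b = n • (u • v + w • b) := by
    funext i
    have hk := hkey i
    simp only [Pi.smul_apply, Pi.add_apply, smul_eq_mul]
    linear_combination (-u : ℤ) * hk + (-(b i)) * huw
  have hun : IsUnit n := hb.2 n _ hbn
  have hn1 : n = 1 := by
    rcases Int.isUnit_iff.mp hun with h1 | h1
    · exact h1
    · omega
  have hvm : v = m • b := by
    funext i
    have hk := hkey i
    rw [hn1, one_mul] at hk
    simpa [Pi.smul_apply, smul_eq_mul] using hk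
  have hum : IsUnit m := hv.2 m _ hvm
  have hm1 : m = 1 := by
    rcases Int.isUnit_iff.mp hum with h1 | h1
    · exact h1
    · omega
  rw [hvm, hm1, one_smul]

lemma U7_eq : ({e0, e1, e2, e3, e4, e5, e6} : Finset (LVec 4)) = Finset.univ.image vU := by
  decide

lemma rayW : ∀ (k : Fin 13), ∀ B ⊆ mW k, ∀ l : Fin 7, toQ (vU l) ∈ cn B → vU l ∈ B := by
  intro k B hB l hm
  by_contra hvB
  have hl : l ∈ ({0,1,2,3,4,5,6} : Finset (Fin 7)) := by
    have huniv : ({0,1,2,3,4,5,6} : Finset (Fin 7)) = Finset.univ := by decide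
    rw [huniv]
    exact Finset.mem_univ l
  exact ray_out_cert hB (wtW_ok k l hl).1 (wtW_ok k l hl).2 hvB hm

lemma mW_nonzero : ∀ (k : Fin 13), ∀ v ∈ mW k, v ≠ 0 := by decide

lemma gens_W : gens (Fam maxW) = (↑({e0, e1, e2, e3, e4, e5, e6} : Finset (LVec 4)) : Set (LVec 4)) := by
  apply Set.Subset.antisymm
  · rintro v ⟨hvprim, hvcone⟩
    rw [cn_singleton] at hvcone
    obtain ⟨B, ⟨M, hM, hB⟩, heq⟩ := hvcone
    obtain ⟨k, -, rfl⟩ := Finset.mem_image.mp hM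
    rcases Finset.eq_empty_or_nonempty B with rfl | ⟨s, hs⟩
    · exfalso
      have h0 : toQ v ∈ cn ({v} : Finset (LVec 4)) := mem_cn_self (Finset.mem_singleton_self v)
      rw [heq, cn_empty, Set.mem_singleton_iff] at h0
      apply hvprim.1
      funext i
      have := congrFun h0 i
      simpa [toQ] using this
    · have hsmem : toQ s ∈ cn ({v} : Finset (LVec 4)) := by
        rw [heq]
        exact mem_cn_self hs
      obtain ⟨q, hq0, hqs⟩ := mem_cn_singleton.mp hsmem
      obtain ⟨l, -, rfl⟩ := Finset.mem_image.mp (hB hs)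
      have hlne : vU l ≠ 0 := (prim_vU l).1
      have hqne : q ≠ 0 := by
        rintro rfl
        apply hlne
        rw [zero_smul] at hqs
        funext i
        have := congrFun hqs i
        simpa [toQ] using this
      have hqpos : 0 < q := lt_of_le_of_ne hq0 (Ne.symm hqne)
      have hv : toQ v = q⁻¹ • toQ (vU l) := by
        rw [hqs, smul_smul, inv_mul_cancel₀ hqne, one_smul]
      have := eq_of_primitive_smul hvprim (prim_vU l) (by positivity) hv
      rw [this]
      rw [U7_eq]
      push_cast
      exact Set.mem_image_of_mem _ (Set.mem_univ l)
  · intro v hv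
    rw [U7_eq] at hv
    rw [Finset.coe_image, Finset.coe_univ, Set.image_univ] at hv
    obtain ⟨l, rfl⟩ := hv
    refine ⟨prim_vU l, ?_⟩
    rw [cn_singleton]
    have hex : ∀ l : Fin 7, ∃ k : Fin 13, ({vU l} : Finset (LVec 4)) ⊆ mW k := by decide
    obtain ⟨k, hk⟩ := hex l
    exact mem_Fam (Finset.mem_image_of_mem _ (Finset.mem_univ k)) hk

/-- master lemma: a cone on a subset of the rays belongs to the fan iff the
generators all lie in a common maximal cone -/
lemma cnP_mem_iff {P : Finset (LVec 4)}
    (hP : P ⊆ ({e0, e1, e2, e3, e4, e5, e6} : Finset (LVec 4))) :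
    cn P ∈ Fam maxW ↔ ∃ k : Fin 13, P ⊆ mW k := by
  constructor
  · rintro ⟨B, ⟨M, hM, hB⟩, heq⟩
    obtain ⟨k, -, rfl⟩ := Finset.mem_image.mp hM
    refine ⟨k, fun p hp => hB ?_⟩
    have hpU : p ∈ Finset.univ.image vU := by rw [← U7_eq]; exact hP hp
    obtain ⟨l, -, rfl⟩ := Finset.mem_image.mp hpU
    exact rayW k B hB l (heq ▸ mem_cn_self hp)
  · rintro ⟨k, hk⟩
    exact mem_Fam (Finset.mem_image_of_mem _ (Finset.mem_univ k)) hk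

end Aux

namespace Aux
open Finset

set_option maxRecDepth 40000 in
lemma primcol_decide : ∀ P0 : Finset (Fin 7),
    (¬ ∃ k : Fin 13, P0 ⊆ mW0 k) → (∀ l ∈ P0, ∃ k : Fin 13, P0.erase l ⊆ mW0 k) →
    (P0 = {2,3,4} ∨ P0 = {1,2,3} ∨ P0 = {1,6} ∨ P0 = {0,4,5} ∨ P0 = {0,5,6}) := by decide

lemma primcol_W (P : Finset (LVec 4)) :
    IsPrimCol (Fam maxW) P ↔ (P = {e2, e3, e4} ∨ P = {e1, e2, e3} ∨ P = {e1, e6} ∨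
      P = {e0, e4, e5} ∨ P = {e0, e5, e6}) := by
  constructor
  · rintro ⟨hPg, hPnot, hPer⟩
    have hPU : P ⊆ ({e0, e1, e2, e3, e4, e5, e6} : Finset (LVec 4)) := by
      intro p hp
      have hm : (p : LVec 4) ∈ gens (Fam maxW) := hPg (Finset.mem_coe.mpr hp)
      rw [gens_W] at hm
      exact Finset.mem_coe.mp hm
    have hPU' : P ⊆ Finset.univ.image vU := by rwa [U7_eq] at hPU
    obtain ⟨P0, -, rfl⟩ := subset_image_vU hPU'
    have h1 : ¬ ∃ k : Fin 13, P0 ⊆ mW0 k := by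
      rintro ⟨k, hk⟩
      exact hPnot (mem_Fam (Finset.mem_image_of_mem _ (Finset.mem_univ k))
        (Finset.image_subset_image hk))
    have h2 : ∀ l ∈ P0, ∃ k : Fin 13, P0.erase l ⊆ mW0 k := by
      intro l hl
      have hx := hPer (vU l) (Finset.mem_image_of_mem _ hl)
      rw [show (P0.image vU).erase (vU l) = (P0.erase l).image vU from
        (Finset.image_erase vU_inj _ _).symm] at hx
      have hsub : (P0.erase l).image vU ⊆ ({e0, e1, e2, e3, e4, e5, e6} : Finset (LVec 4)) :=
        (Finset.image_subset_image (Finset.erase_subset _ _)).trans hPU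
      obtain ⟨k, hk⟩ := (cnP_mem_iff hsub).mp hx
      exact ⟨k, (Finset.image_subset_image_iff vU_inj).mp hk⟩
    rcases primcol_decide P0 h1 h2 with h | h | h | h | h
    · left; rw [h]; decide
    · right; left; rw [h]; decide
    · right; right; left; rw [h]; decide
    · right; right; right; left; rw [h]; decide
    · right; right; right; right; rw [h]; decide
  · intro h
    have key : ∀ (Q : Finset (LVec 4)), Q ⊆ ({e0, e1, e2, e3, e4, e5, e6} : Finset (LVec 4)) →
        (¬ ∃ k : Fin 13, Q ⊆ mW k) → (∀ x ∈ Q, ∃ k : Fin 13, Q.erase x ⊆ mW k) →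
        IsPrimCol (Fam maxW) Q := by
      intro Q hQU hQ1 hQ2
      refine ⟨?_, ?_, ?_⟩
      · rw [gens_W]; exact Finset.coe_subset.mpr hQU
      · intro hc; exact hQ1 ((cnP_mem_iff hQU).mp hc)
      · intro x hx
        obtain ⟨k, hk⟩ := hQ2 x hx
        exact mem_Fam (Finset.mem_image_of_mem _ (Finset.mem_univ k)) hk
    rcases h with rfl | rfl | rfl | rfl | rfl <;>
      exact key _ (by decide) (by decide) (by decide)

lemma primrel_gen {P Y : Finset (LVec 4)}
    (hY : Y ⊆ ({e0, e1, e2, e3, e4, e5, e6} : Finset (LVec 4)))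
    (hYk : ∃ k : Fin 13, Y ⊆ mW k) (hsum : ∑ x ∈ P, x = ∑ y ∈ Y, (1:ℤ) • y) :
    HasPrimRel (Fam maxW) P Y (fun _ => 1) := by
  obtain ⟨k, hk⟩ := hYk
  exact ⟨by rw [gens_W]; exact Finset.coe_subset.mpr hY,
    mem_Fam (Finset.mem_image_of_mem _ (Finset.mem_univ k)) hk,
    fun y _ => one_pos, hsum⟩

lemma scf_W : IsSmoothCompleteFan (Fam maxW) := by
  constructor
  · exact Fam_finite maxW
  · rintro σ ⟨B, ⟨M, hM, hB⟩, rfl⟩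
    obtain ⟨k, -, rfl⟩ := Finset.mem_image.mp hM
    have hB' : B ⊆ (cdW k).M := by rw [cdW_M k]; exact hB
    exact smooth_of_cd (cdW_ok k) hB'
  · exact Fam_faces maxW
  · rintro σ ⟨B1, ⟨M1, hM1, hB1⟩, rfl⟩ τ ⟨B2, ⟨M2, hM2, hB2⟩, rfl⟩
    obtain ⟨k, -, rfl⟩ := Finset.mem_image.mp hM1
    obtain ⟨l, -, rfl⟩ := Finset.mem_image.mp hM2
    have hB1' : B1 ⊆ (cdW k).M := by rw [cdW_M k]; exact hB1
    have hB2' : B2 ⊆ (cdW l).M := by rw [cdW_M l]; exact hB2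
    obtain ⟨hs1, hs2, hs3, hs4⟩ := sepW_ok k l
    have heq : cn B1 ∩ cn B2 = cn (B1 ∩ B2) := by
      apply inter_cert (cdW_ok k) (cdW_ok l) hB1' hB2' (sepW k l)
      · rw [cdW_M k]; exact hs1
      · rw [cdW_M l]; exact hs2
      · rw [cdW_M k, cdW_M l]; exact hs3
      · rw [cdW_M k, cdW_M l]; exact hs4
    constructor
    · rw [heq]
      exact CD.isFaceOf_sub (cdW_ok k) Finset.inter_subset_left hB1'
    · rw [heq]
      exact CD.isFaceOf_sub (cdW_ok l) Finset.inter_subset_right hB2'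
  · exact covers_W

end Aux

/-- The fan `Σ_W` is a smooth complete fan in `ℤ^4` with `G(Σ_W) = {e₀,…,e₆}`,
whose primitive collections are exactly `{e₂,e₃,e₄}`, `{e₁,e₂,e₃}`, `{e₁,e₆}`,
`{e₀,e₄,e₅}`, `{e₀,e₅,e₆}`, with primitive relations `e₂+e₃+e₄ = e₆`,
`e₁+e₂+e₃ = e₅`, `e₁+e₆ = e₄+e₅`, `e₀+e₄+e₅ = 0`, `e₀+e₅+e₆ = e₂+e₃`.
The primitive collection `{e₁,e₆}` has degree 0, so `Σ_W` is not Fano. -/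
theorem sigmaW_not_fano :
    IsSmoothCompleteFan SigmaW ∧
    gens SigmaW = {e0, e1, e2, e3, e4, e5, e6} ∧
    (∀ P : Finset (LVec 4), IsPrimCol SigmaW P ↔
      (P = {e2, e3, e4} ∨ P = {e1, e2, e3} ∨ P = {e1, e6} ∨
       P = {e0, e4, e5} ∨ P = {e0, e5, e6})) ∧
    HasPrimRel SigmaW {e2, e3, e4} {e6} (fun _ => 1) ∧
    HasPrimRel SigmaW {e1, e2, e3} {e5} (fun _ => 1) ∧
    HasPrimRel SigmaW {e1, e6} {e4, e5} (fun _ => 1) ∧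
    HasPrimRel SigmaW {e0, e4, e5} ∅ (fun _ => 1) ∧
    HasPrimRel SigmaW {e0, e5, e6} {e2, e3} (fun _ => 1) ∧
    degOf ({e1, e6} : Finset (LVec 4)) {e4, e5} (fun _ => 1) = 0 ∧
    ¬ IsFano SigmaW := by
  
  have hW := Aux.SigmaW_eq
  have hdeg : degOf ({e1, e6} : Finset (LVec 4)) {e4, e5} (fun _ => 1) = 0 := by decide
  have hpc : ∀ P : Finset (LVec 4), IsPrimCol SigmaW P ↔
      (P = {e2, e3, e4} ∨ P = {e1, e2, e3} ∨ P = {e1, e6} ∨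
       P = {e0, e4, e5} ∨ P = {e0, e5, e6}) := by
    intro P
    rw [hW]
    exact Aux.primcol_W P
  have hpr3 : HasPrimRel SigmaW {e1, e6} {e4, e5} (fun _ => 1) := by
    rw [hW]
    exact Aux.primrel_gen (by decide) (by decide) (by decide)
  refine ⟨?_, ?_, hpc, ?_, ?_, hpr3, ?_, ?_, hdeg, ?_⟩
  · rw [hW]; exact Aux.scf_W
  · rw [hW, Aux.gens_W]
    simp only [Finset.coe_insert, Finset.coe_singleton]
  · rw [hW]; exact Aux.primrel_gen (by decide) (by decide) (by decide)
  · rw [hW]; exact Aux.primrel_gen (by decide) (by decide) (by decide)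
  · rw [hW]; exact Aux.primrel_gen (by decide) (by decide) (by decide)
  · rw [hW]; exact Aux.primrel_gen (by decide) (by decide) (by decide)
  · intro hF
    have h1 := hF {e1, e6} {e4, e5} (fun _ => 1)
      ((hpc _).mpr (Or.inr (Or.inr (Or.inl rfl)))) hpr3
    rw [hdeg] at h1
    exact absurd h1 (by norm_num)
end

section
/- Let Σ' be a smooth complete fan in ℤ^n, let τ be a cone of Σ' with primitive generators x_1, …, x_h where h ≥ 2, and let Σ be the star subdivision of Σ' at τ, with new ray generated by x = x_1 + ⋯ + x_h. Then P = {x_1, …, x_h} is a primitive collection of Σ whose primitive relation is x_1 + ⋯ + x_h = x, of degree h − 1. (This is the primitive relation associated to a smooth equivariant blow-up; it is the numerical class of a ℙ^1 contained in a fiber of the blow-down.) -/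
variable {n : ℕ}

lemma toQ_injective : Function.Injective (toQ (n := n)) := by
  intro a b h
  funext i
  have := congrFun h i
  simpa [toQ] using this

lemma toQ_sum (S : Finset (LVec n)) : toQ (∑ t ∈ S, t) = ∑ t ∈ S, toQ t := by
  funext i
  simp [toQ, Finset.sum_apply]

lemma coneGen_mono {S S' : Set (Vec n)} (h : S ⊆ S') : coneGen S ⊆ coneGen S' := by
  rintro y ⟨T, c, hT, hc, rfl⟩
  exact ⟨T, c, hT.trans h, hc, rfl⟩

lemma subset_coneGen {S : Set (Vec n)} : S ⊆ coneGen S := by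
  intro v hv
  classical
  exact ⟨{v}, fun _ => 1, by simpa using hv, fun _ => zero_le_one, by simp⟩

lemma sum_indicator_subset {U T : Finset (Vec n)} (h : T ⊆ U) (c : Vec n → ℚ) :
    ∑ v ∈ U, (if v ∈ T then c v else 0) • v = ∑ v ∈ T, c v • v := by
  classical
  rw [Finset.sum_congr rfl (fun v _ => by rw [ite_smul, zero_smul])]
  rw [Finset.sum_ite_mem, Finset.inter_eq_right.mpr h]

lemma mem_coneGen_image_iff {ι : Type} {g : ι → Vec n} (hg : Function.Injective g)
    (I : Finset ι) {y : Vec n} :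
    y ∈ coneGen (g '' ↑I) ↔ ∃ c : ι → ℚ, (∀ i, 0 ≤ c i) ∧ y = ∑ i ∈ I, c i • g i := by
  classical
  constructor
  · rintro ⟨T, c, hT, hc, rfl⟩
    have hTJ : T = (I.filter (fun i => g i ∈ T)).image g := by
      ext v
      simp only [Finset.mem_image, Finset.mem_filter]
      constructor
      · intro hv
        obtain ⟨i, hi, rfl⟩ := hT hv
        exact ⟨i, ⟨hi, hv⟩, rfl⟩
      · rintro ⟨i, ⟨hi, hv⟩, rfl⟩
        exact hv
    refine ⟨fun i => if g i ∈ T then c (g i) else 0,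
      fun i => by dsimp only; split <;> simp [hc _], ?_⟩
    conv_lhs => rw [hTJ]
    rw [Finset.sum_image (fun a _ b _ hab => hg hab), Finset.sum_filter]
    exact Finset.sum_congr rfl fun i _ => by rw [ite_smul, zero_smul]
  · rintro ⟨c, hc, rfl⟩
    refine ⟨I.image g, fun v => ∑ i ∈ I.filter (fun i => g i = v), c i, ?_, ?_, ?_⟩
    · intro v hv
      simp only [Finset.coe_image, Set.mem_image] at hv ⊢
      exact hv
    · intro s
      exact Finset.sum_nonneg fun i _ => hc i
    · rw [Finset.sum_image (fun a _ b _ hab => hg hab)]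
      refine Finset.sum_congr rfl fun i hi => ?_
      dsimp only
      have h1 : I.filter (fun j => g j = g i) = {i} := by
        ext j
        simp only [Finset.mem_filter, Finset.mem_singleton]
        constructor
        · rintro ⟨_, h⟩; exact hg h
        · rintro rfl; exact ⟨hi, rfl⟩
      rw [h1, Finset.sum_singleton]

lemma mem_coneGen_singleton {v y : Vec n} :
    y ∈ coneGen {v} ↔ ∃ c : ℚ, 0 ≤ c ∧ y = c • v := by
  constructor
  · rintro ⟨T, c, hT, hc, rfl⟩
    refine ⟨∑ s ∈ T, c s, Finset.sum_nonneg fun s _ => hc s, ?_⟩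
    rw [Finset.sum_smul]
    apply Finset.sum_congr rfl
    intro s hs
    have : s = v := hT hs
    rw [this]
  · rintro ⟨c, hc, rfl⟩
    exact ⟨{v}, fun _ => c, by simp, fun _ => hc, by simp⟩

lemma coneGen_add {S : Set (Vec n)} {y z : Vec n} (hy : y ∈ coneGen S) (hz : z ∈ coneGen S) :
    y + z ∈ coneGen S := by
  classical
  obtain ⟨T1, c1, hT1, hc1, rfl⟩ := hy
  obtain ⟨T2, c2, hT2, hc2, rfl⟩ := hz
  refine ⟨T1 ∪ T2, fun v => (if v ∈ T1 then c1 v else 0) + (if v ∈ T2 then c2 v else 0),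
    ?_, ?_, ?_⟩
  · intro v hv
    rcases Finset.mem_union.mp (by exact_mod_cast hv) with h | h
    · exact hT1 h
    · exact hT2 h
  · intro s
    refine add_nonneg ?_ ?_ <;> (split <;> simp [hc1 _, hc2 _])
  · simp only [add_smul]
    rw [Finset.sum_add_distrib,
      sum_indicator_subset Finset.subset_union_left,
      sum_indicator_subset Finset.subset_union_right]

lemma coneGen_smul {S : Set (Vec n)} {y : Vec n} {c : ℚ} (hc : 0 ≤ c) (hy : y ∈ coneGen S) :
    c • y ∈ coneGen S := by
  obtain ⟨T, d, hT, hd, rfl⟩ := hy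
  refine ⟨T, fun v => c * d v, hT, fun s => mul_nonneg hc (hd s), ?_⟩
  rw [Finset.smul_sum]
  apply Finset.sum_congr rfl
  intro v _
  rw [smul_smul]

lemma coneGen_zero_mem {S : Set (Vec n)} : (0 : Vec n) ∈ coneGen S :=
  ⟨∅, fun _ => 0, by simp, fun _ => le_refl 0, by simp⟩

lemma coneGen_subset_coneGen {S S' : Set (Vec n)} (h : S ⊆ coneGen S') :
    coneGen S ⊆ coneGen S' := by
  classical
  rintro y ⟨T, c, hT, hc, rfl⟩
  induction T using Finset.induction_on with
  | empty => simpa using coneGen_zero_mem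
  | @insert a s ha ih =>
    rw [Finset.sum_insert ha]
    refine coneGen_add (coneGen_smul (hc a) (h (hT (by simp)))) (ih ?_)
    intro v hv
    exact hT (by simp [hv])
noncomputable def ratBasis {n : ℕ} (B : Module.Basis (Fin n) ℤ (LVec n)) : Module.Basis (Fin n) ℚ (Vec n) := by
  classical
  letI h1 := (Pi.basisFun ℤ (Fin n)).invertibleToMatrix B
  letI h2 : Invertible ((((Pi.basisFun ℤ (Fin n)).toMatrix ⇑B)).map (Int.cast : ℤ → ℚ)) :=
    Invertible.map ((Int.castRingHom ℚ).mapMatrix) _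
  exact (Pi.basisFun ℚ (Fin n)).map (Matrix.toLinearEquiv' _ h2)

lemma ratBasis_apply {n : ℕ} (B : Module.Basis (Fin n) ℤ (LVec n)) (i : Fin n) :
    ratBasis B i = toQ (B i) := by
  classical
  funext j
  simp [ratBasis, toQ, Matrix.toLinearEquiv', Matrix.mulVec_single_one,
    Module.Basis.toMatrix_apply, Matrix.toLin'_apply, unitOfInvertible]

lemma image_toQ_basis {n : ℕ} (B : Module.Basis (Fin n) ℤ (LVec n)) (I : Finset (Fin n)) :
    toQ '' (⇑B '' ↑I) = ⇑(ratBasis B) '' ↑I := by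
  rw [Set.image_image]
  exact Set.image_congr fun i _ => (ratBasis_apply B i).symm

lemma mem_coneB_iff {n : ℕ} (B : Module.Basis (Fin n) ℤ (LVec n)) (I : Finset (Fin n)) {y : Vec n} :
    y ∈ coneGen (toQ '' (⇑B '' ↑I)) ↔
      (∀ i, 0 ≤ (ratBasis B).repr y i) ∧ ∀ i ∉ I, (ratBasis B).repr y i = 0 := by
  classical
  rw [image_toQ_basis, mem_coneGen_image_iff (ratBasis B).injective]
  constructor
  · rintro ⟨c, hc, rfl⟩
    have hrep : ∀ j, (ratBasis B).repr (∑ i ∈ I, c i • ratBasis B i) j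
        = if j ∈ I then c j else 0 := by
      intro j
      rw [map_sum, Finset.sum_apply']
      rw [Finset.sum_congr rfl (fun i _ => by
        rw [map_smul, Finsupp.smul_apply, Module.Basis.repr_self, Finsupp.single_apply, smul_eq_mul])]
      simp only [mul_ite, mul_one, mul_zero]
      exact Finset.sum_ite_eq' I j c
    constructor
    · intro i
      rw [hrep i]
      split <;> simp [hc _]
    · intro i hi
      rw [hrep i, if_neg hi]
  · rintro ⟨h1, h2⟩
    have hy : y = ∑ i ∈ I, (ratBasis B).repr y i • ratBasis B i := by
      conv_lhs => rw [← (ratBasis B).sum_repr y]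
      exact (Finset.sum_subset (Finset.subset_univ I)
        (fun i _ hi => by rw [h2 i hi, zero_smul])).symm
    exact ⟨fun i => (ratBasis B).repr y i, h1, hy⟩

lemma face_coneB {n : ℕ} (B : Module.Basis (Fin n) ℤ (LVec n)) {J I : Finset (Fin n)} (hJI : J ⊆ I) :
    IsFaceOf (coneGen (toQ '' (⇑B '' ↑J))) (coneGen (toQ '' (⇑B '' ↑I))) := by
  classical
  refine ⟨∑ i ∈ I \ J, (ratBasis B).coord i, ?_, ?_⟩
  · intro y hy
    obtain ⟨h1, _⟩ := (mem_coneB_iff B I).mp hy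
    simp only [LinearMap.coe_sum, Finset.sum_apply, Module.Basis.coord_apply]
    exact Finset.sum_nonneg fun i _ => h1 i
  · ext y
    simp only [Set.mem_setOf_eq, LinearMap.coe_sum, Finset.sum_apply, Module.Basis.coord_apply]
    rw [mem_coneB_iff B I, mem_coneB_iff B J]
    constructor
    · rintro ⟨h1, h2⟩
      refine ⟨⟨h1, fun i hi => h2 i (fun hJ => hi (hJI hJ))⟩, ?_⟩
      exact Finset.sum_eq_zero fun i hi => h2 i (Finset.mem_sdiff.mp hi).2
    · rintro ⟨⟨h1, h2⟩, h3⟩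
      have hz : ∀ i ∈ I \ J, (ratBasis B).repr y i = 0 := by
        intro i hi
        have := (Finset.sum_eq_zero_iff_of_nonneg (fun i _ => h1 i)).mp h3
        exact this i hi
      refine ⟨h1, fun i hi => ?_⟩
      by_cases hI : i ∈ I
      · exact hz i (Finset.mem_sdiff.mpr ⟨hI, hi⟩)
      · exact h2 i hI

lemma isPrimitive_basis {n : ℕ} (B : Module.Basis (Fin n) ℤ (LVec n)) (i : Fin n) :
    IsPrimitive (B i) := by
  refine ⟨B.ne_zero i, ?_⟩
  intro k w h
  have h2 := congrArg (fun v => B.repr v i) h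
  simp only [map_smul, Finsupp.smul_apply, Module.Basis.repr_self, Finsupp.single_eq_same,
    smul_eq_mul] at h2
  exact IsUnit.of_mul_eq_one _ h2.symm

lemma eq_of_primitive_smul {n : ℕ} {v w : LVec n} (hv : IsPrimitive v) (hw : IsPrimitive w)
    {c : ℚ} (hc : 0 < c) (h : toQ v = c • toQ w) : v = w := by
  have hnum : (0:ℤ) < c.num := Rat.num_pos.mpr hc
  have hden : (0:ℤ) < (c.den : ℤ) := by exact_mod_cast c.den_pos
  have hq : ∀ j, (c.den : ℤ) * v j = c.num * w j := by
    intro j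
    have hj : (v j : ℚ) = c * (w j : ℚ) := by
      have := congrFun h j; simpa [toQ] using this
    have h2 : ((c.den : ℤ) : ℚ) * (v j : ℚ) = ((c.num : ℚ)) * (w j : ℚ) := by
      rw [hj]
      have hd0 : (c.den : ℚ) ≠ 0 := by exact_mod_cast c.den_nz
      have hcd : (c.den : ℚ) * c = (c.num : ℚ) := by
        have h3 := Rat.num_div_den c
        rw [div_eq_iff hd0] at h3
        rw [mul_comm]
        exact h3.symm
      push_cast
      rw [← mul_assoc, hcd]
    exact_mod_cast h2
  have hco : IsCoprime c.num (c.den : ℤ) := by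
    rw [Int.isCoprime_iff_gcd_eq_one]
    simpa [Int.gcd] using c.reduced
  have hdvd : ∀ j, c.num ∣ v j := by
    intro j
    refine hco.dvd_of_dvd_mul_left (x := c.num) (y := (c.den : ℤ)) (z := v j) ?_
    exact ⟨w j, hq j⟩
  have hvu : v = c.num • (fun j => v j / c.num) := by
    funext j
    exact (Int.mul_ediv_cancel' (hdvd j)).symm
  have hu1 : c.num = 1 := by
    rcases Int.isUnit_iff.mp (hv.2 _ _ hvu) with h1 | h1
    · exact h1
    · omega
  have hd1 : (c.den : ℤ) = 1 := by
    have hwv : w = (c.den : ℤ) • v := by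
      funext j
      have := hq j
      rw [hu1, one_mul] at this
      exact this.symm ▸ rfl
    rcases Int.isUnit_iff.mp (hw.2 _ _ hwv) with h1 | h1
    · exact h1
    · omega
  have hc1 : c = 1 := by
    have := Rat.num_div_den c
    rw [hu1] at this
    have hd : (c.den : ℚ) = 1 := by exact_mod_cast hd1
    rw [hd] at this
    simpa using this.symm
  rw [hc1, one_smul] at h
  exact toQ_injective h
lemma toQ_zero {n : ℕ} : toQ (0 : LVec n) = 0 := by
  funext i; simp [toQ]

lemma toQ_ne_zero {n : ℕ} {v : LVec n} (hv : v ≠ 0) : toQ v ≠ 0 := by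
  intro h
  exact hv (toQ_injective (h.trans toQ_zero.symm))

lemma toQ_sum' {n : ℕ} {ι : Type} (s : Finset ι) (f : ι → LVec n) :
    toQ (∑ i ∈ s, f i) = ∑ i ∈ s, toQ (f i) := by
  funext j
  simp [toQ, Finset.sum_apply]

lemma repr_toQ_basis {n : ℕ} (B : Module.Basis (Fin n) ℤ (LVec n)) (i j : Fin n) :
    (ratBasis B).repr (toQ (B i)) j = if i = j then 1 else 0 := by
  rw [← ratBasis_apply, Module.Basis.repr_self, Finsupp.single_apply]

lemma gens_determined {n : ℕ} {F : Set (Set (Vec n))} (hF : IsSmoothCompleteFan F)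
    {S : Finset (LVec n)} (hS : ↑S ⊆ gens F) (hσ : coneGen (toQ '' ↑S) ∈ F)
    {B : Module.Basis (Fin n) ℤ (LVec n)} {I : Finset (Fin n)}
    (hEq : coneGen (toQ '' ↑S) = coneGen (toQ '' (⇑B '' ↑I))) :
    ↑S = ⇑B '' ↑I := by
  classical
  have step1 : ∀ s ∈ S, ∃ i ∈ I, B i = s := by
    intro s hs
    obtain ⟨hprim, hray⟩ := hS hs
    have hraysub : coneGen {toQ s} ⊆ coneGen (toQ '' ↑S) :=
      coneGen_mono (Set.singleton_subset_iff.mpr ⟨s, hs, rfl⟩)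
    have hint : coneGen {toQ s} ∩ coneGen (toQ '' ↑S) = coneGen {toQ s} :=
      Set.inter_eq_left.mpr hraysub
    obtain ⟨_, hface⟩ := hF.inter _ hray _ hσ
    rw [hint] at hface
    obtain ⟨u, hu0, hueq⟩ := hface
    have hsσ : toQ s ∈ coneGen (toQ '' (⇑B '' ↑I)) := by
      rw [← hEq]; exact subset_coneGen ⟨s, hs, rfl⟩
    have hsray : toQ s ∈ coneGen {toQ s} := subset_coneGen rfl
    have hus : u (toQ s) = 0 := by
      rw [hueq] at hsray
      exact hsray.2
    rw [image_toQ_basis B I, mem_coneGen_image_iff (ratBasis B).injective I] at hsσ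
    obtain ⟨c, hc, hcs⟩ := hsσ
    have hBqmem : ∀ i ∈ I, ratBasis B i ∈ coneGen (toQ '' ↑S) := by
      intro i hi
      rw [hEq, image_toQ_basis B I]
      exact subset_coneGen ⟨i, hi, rfl⟩
    have husum : ∑ i ∈ I, c i * u (ratBasis B i) = 0 := by
      have h5 : u (toQ s) = ∑ i ∈ I, c i * u (ratBasis B i) := by
        rw [hcs, map_sum]
        exact Finset.sum_congr rfl fun i _ => by rw [map_smul, smul_eq_mul]
      rw [← h5, hus]
    have hterm : ∀ i ∈ I, c i * u (ratBasis B i) = 0 :=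
      (Finset.sum_eq_zero_iff_of_nonneg
        (fun i hi => mul_nonneg (hc i) (hu0 _ (hBqmem i hi)))).mp husum
    have hs0 : toQ s ≠ 0 := toQ_ne_zero hprim.1
    have hex : ∃ i ∈ I, c i ≠ 0 := by
      by_contra hno
      push_neg at hno
      apply hs0
      rw [hcs]
      exact Finset.sum_eq_zero fun i hi => by rw [hno i hi, zero_smul]
    obtain ⟨i0, hi0, hci0⟩ := hex
    have hu_i0 : u (ratBasis B i0) = 0 := by
      rcases mul_eq_zero.mp (hterm i0 hi0) with h | h
      · exact absurd h hci0
      · exact h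
    have hBqray : ratBasis B i0 ∈ coneGen {toQ s} := by
      rw [hueq]
      exact ⟨hBqmem i0 hi0, hu_i0⟩
    obtain ⟨d, hd, hdeq⟩ := mem_coneGen_singleton.mp hBqray
    have hd0 : d ≠ 0 := by
      intro h0
      apply (ratBasis B).ne_zero i0
      rw [hdeq, h0, zero_smul]
    have hdpos : 0 < d⁻¹ := by
      have : 0 < d := lt_of_le_of_ne hd (Ne.symm hd0)
      positivity
    have hsd : toQ s = d⁻¹ • toQ (B i0) := by
      rw [← ratBasis_apply, hdeq, smul_smul, inv_mul_cancel₀ hd0, one_smul]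
    exact ⟨i0, hi0, (eq_of_primitive_smul hprim (isPrimitive_basis B i0) hdpos hsd).symm⟩
  have hJ : ↑S = ⇑B '' ↑(I.filter (fun i => B i ∈ S)) := by
    ext s
    simp only [Finset.coe_filter, Set.mem_image, Set.mem_setOf_eq, Finset.mem_coe]
    constructor
    · intro hs
      obtain ⟨i, hi, hBi⟩ := step1 s hs
      exact ⟨i, ⟨hi, by rw [hBi]; exact hs⟩, hBi⟩
    · rintro ⟨i, ⟨hi, hBi⟩, rfl⟩
      exact hBi
  set J := I.filter (fun i => B i ∈ S) with hJdef
  have hJI : J ⊆ I := Finset.filter_subset _ _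
  have hIJ : I ⊆ J := by
    intro i hi
    by_contra hiJ
    have hmem : ratBasis B i ∈ coneGen (toQ '' (⇑B '' ↑I)) := by
      rw [image_toQ_basis B I]; exact subset_coneGen ⟨i, hi, rfl⟩
    rw [← hEq, hJ] at hmem
    obtain ⟨_, hzero⟩ := (mem_coneB_iff B J).mp hmem
    have h6 := hzero i hiJ
    rw [Module.Basis.repr_self] at h6
    simp at h6
  rw [hJ, Finset.Subset.antisymm hIJ hJI]
/-- The primitive relation associated to a smooth equivariant blow-up: if `Σ` is
the star subdivision of the smooth complete fan `Σ'` at a cone with primitive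
generators `x₁, …, x_h` (`h ≥ 2`) and new ray generated by `x = x₁ + ⋯ + x_h`,
then `P = {x₁, …, x_h}` is a primitive collection of `Σ` whose primitive relation is
`x₁ + ⋯ + x_h = x`, of degree `h - 1`. -/
theorem blowup_primitive_relation {n : ℕ} (F : Set (Set (Vec n)))
    (T : Finset (LVec n)) (hF : IsSmoothCompleteFan F)
    (hT : (↑T : Set (LVec n)) ⊆ gens F) (hcard : 2 ≤ T.card)
    (hcone : coneGen (toQ '' ↑T) ∈ F) :
    IsPrimCol (starSubdiv F T) T ∧
    HasPrimRel (starSubdiv F T) T {∑ t ∈ T, t} (fun _ => 1) ∧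
    degOf T ({∑ t ∈ T, t} : Finset (LVec n)) (fun _ => 1) = (T.card : ℤ) - 1 := by
  classical
  obtain ⟨B, I, hBI⟩ := hF.smooth _ hcone
  have hTset : ↑T = ⇑B '' ↑I := gens_determined hF hT hcone hBI
  have hBinj : Function.Injective ⇑B := B.injective
  have hTI : T = I.image B := Finset.coe_injective (by rw [Finset.coe_image, hTset])
  have hIcard : 2 ≤ I.card := by
    have h := hcard
    rwa [hTI, Finset.card_image_of_injective _ hBinj] at h
  set x : LVec n := ∑ t ∈ T, t with hxdef
  have hidx : ∀ t ∈ T, ∃ i ∈ I, B i = t := by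
    intro t ht
    have h1 : t ∈ ⇑B '' ↑I := by rw [← hTset]; exact ht
    obtain ⟨i, hi, h2⟩ := h1
    exact ⟨i, hi, h2⟩
  have hxI : x = ∑ i ∈ I, B i := by
    rw [hxdef, hTI, Finset.sum_image (fun a _ b _ h => hBinj h)]
  have hxQrepr : ∀ j, (ratBasis B).repr (toQ x) j = if j ∈ I then 1 else 0 := by
    intro j
    rw [hxI, toQ_sum', map_sum, Finset.sum_apply']
    rw [Finset.sum_congr rfl (fun i _ => repr_toQ_basis B i j)]
    exact Finset.sum_ite_eq' I j (fun _ => 1)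
  have hxZrepr : ∀ j, B.repr x j = if j ∈ I then 1 else 0 := by
    intro j
    rw [hxI, map_sum, Finset.sum_apply']
    rw [Finset.sum_congr rfl (fun i _ => by rw [Module.Basis.repr_self, Finsupp.single_apply])]
    exact Finset.sum_ite_eq' I j (fun _ => 1)
  obtain ⟨i0, hi0⟩ := Finset.card_pos.mp (show 0 < I.card by omega)
  have hxprim : IsPrimitive x := by
    constructor
    · intro h0
      have h1 := hxZrepr i0
      rw [h0, if_pos hi0] at h1
      simp at h1
    · intro k w hkw
      have h1 := hxZrepr i0
      rw [if_pos hi0, hkw, map_smul, Finsupp.smul_apply, smul_eq_mul] at h1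
      exact IsUnit.of_mul_eq_one _ h1
  have hxray : coneGen {toQ x} ∈ starSubdiv F T := by
    apply Set.mem_union_right
    refine ⟨∅, by simp, ⟨coneGen (toQ '' ↑T), hcone, subset_rfl, ?_⟩, ?_, ?_⟩
    · have h1 : (↑(∅ : Finset (LVec n)) : Set (LVec n)) = ⇑B '' ↑(∅ : Finset (Fin n)) := by
        simp
      rw [h1, hBI]
      exact face_coneB B (Finset.empty_subset I)
    · intro hsub
      have hBi0T : B i0 ∈ T := by
        rw [← Finset.mem_coe, hTset]; exact ⟨i0, hi0, rfl⟩
      have h2 := hsub (subset_coneGen ⟨B i0, hBi0T, rfl⟩)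
      rw [mem_coneGen_image_iff toQ_injective (∅ : Finset (LVec n))] at h2
      obtain ⟨c, _, hc0⟩ := h2
      rw [Finset.sum_empty] at hc0
      exact toQ_ne_zero (isPrimitive_basis B i0).1 hc0
    · have h1 : (insert x ∅ : Finset (LVec n)) = {x} := rfl
      rw [h1]
      simp
  refine ⟨⟨?_, ?_, ?_⟩, ⟨?_, ?_, fun y _ => one_pos, ?_⟩, ?_⟩
  · -- (1a) T ⊆ gens (starSubdiv F T)
    intro t ht
    rw [Finset.mem_coe] at ht
    obtain ⟨i_t, hit, hBit⟩ := hidx t ht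
    refine ⟨(hT ht).1, Set.mem_union_left _ ⟨(hT ht).2, ?_⟩⟩
    intro hsub
    obtain ⟨i1, hi1, hne1⟩ :=
      Finset.exists_mem_ne (show 1 < I.card by omega) i_t
    have hBi1T : B i1 ∈ T := by rw [← Finset.mem_coe, hTset]; exact ⟨i1, hi1, rfl⟩
    have h2 := hsub (subset_coneGen ⟨B i1, hBi1T, rfl⟩)
    obtain ⟨c, hcge, hceq⟩ := mem_coneGen_singleton.mp h2
    rw [← hBit] at hceq
    have h3 := congrArg (fun y => (ratBasis B).repr y i1) hceq
    simp only [map_smul, Finsupp.smul_apply, smul_eq_mul] at h3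
    rw [repr_toQ_basis, repr_toQ_basis, if_pos rfl, if_neg (Ne.symm hne1)] at h3
    simp at h3
  · -- (1b) coneGen T ∉ starSubdiv F T
    intro hmem
    rcases hmem with ⟨_, hns⟩ | ⟨A, hA, ⟨σ, hσF, hTσ, hfaceA⟩, hnsub, hEq2⟩
    · exact hns subset_rfl
    · have hex : ∃ t0 ∈ T, toQ t0 ∉ coneGen (toQ '' ↑A) := by
        by_contra hno
        push_neg at hno
        apply hnsub
        apply coneGen_subset_coneGen
        rintro y ⟨t, ht, rfl⟩
        exact hno t ht
      obtain ⟨t0, ht0, hnt0⟩ := hex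
      obtain ⟨it0, hit0, hBit0⟩ := hidx t0 ht0
      obtain ⟨i1, hi1, hne1⟩ :=
        Finset.exists_mem_ne (show 1 < I.card by omega) it0
      have hmem2 : toQ t0 ∈ coneGen (toQ '' ↑(insert x A)) := by
        rw [← hEq2]
        exact subset_coneGen ⟨t0, ht0, rfl⟩
      rw [mem_coneGen_image_iff toQ_injective (insert x A)] at hmem2
      obtain ⟨c, hc, hceq⟩ := hmem2
      have hcoordA : ∀ s ∈ insert x A, (0:ℚ) ≤ (ratBasis B).repr (toQ s) i1 := by
        intro s hs
        have h6 : toQ s ∈ coneGen (toQ '' ↑T) := by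
          rw [hEq2]
          exact subset_coneGen ⟨s, Finset.mem_coe.mpr hs, rfl⟩
        rw [hBI] at h6
        exact ((mem_coneB_iff B I).mp h6).1 i1
      have h4 := congrArg (fun y => (ratBasis B).repr y i1) hceq
      rw [← hBit0, repr_toQ_basis, if_neg (Ne.symm hne1), map_sum, Finset.sum_apply'] at h4
      rw [Finset.sum_congr rfl
        (fun s _ => by rw [map_smul, Finsupp.smul_apply, smul_eq_mul])] at h4
      have hterm := (Finset.sum_eq_zero_iff_of_nonneg
        (fun s hs => mul_nonneg (hc s) (hcoordA s hs))).mp h4.symm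
      have hx1 : (ratBasis B).repr (toQ x) i1 = 1 := by rw [hxQrepr, if_pos hi1]
      have hcx0 : c x = 0 := by
        have h5 := hterm x (Finset.mem_insert_self x A)
        rw [hx1, mul_one] at h5
        exact h5
      have h7 : toQ t0 = ∑ s ∈ A, c s • toQ s := by
        by_cases hxA : x ∈ A
        · rw [hceq, Finset.insert_eq_self.mpr hxA]
        · rw [hceq, Finset.sum_insert hxA, hcx0, zero_smul, zero_add]
      exact hnt0 ((mem_coneGen_image_iff toQ_injective A).mpr ⟨c, hc, h7⟩)
  · -- (1c) erase cones are in the star subdivision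
    intro t ht
    obtain ⟨i_t, hit, hBit⟩ := hidx t ht
    have hErase : (↑(T.erase t) : Set (LVec n)) = ⇑B '' ↑(I.erase i_t) := by
      rw [Finset.coe_erase, Finset.coe_erase, hTset, ← hBit, Set.image_diff hBinj,
        Set.image_singleton]
    apply Set.mem_union_left
    refine ⟨?_, ?_⟩
    · apply hF.faces _ hcone
      rw [hErase, hBI]
      exact face_coneB B (Finset.erase_subset _ _)
    · intro hsub
      have h2 := hsub (subset_coneGen ⟨t, ht, rfl⟩)
      rw [hErase] at h2
      obtain ⟨_, hzero⟩ := (mem_coneB_iff B (I.erase i_t)).mp h2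
      have h3 := hzero i_t (Finset.notMem_erase _ _)
      rw [← hBit, repr_toQ_basis, if_pos rfl] at h3
      exact one_ne_zero h3
  · -- Y ⊆ gens (starSubdiv F T)
    intro y hy
    rw [Finset.coe_singleton, Set.mem_singleton_iff] at hy
    subst hy
    exact ⟨hxprim, hxray⟩
  · -- coneGen Y ∈ starSubdiv F T
    have h1 : toQ '' (↑({x} : Finset (LVec n)) : Set (LVec n)) = {toQ x} := by simp
    rw [h1]
    exact hxray
  · -- primitive relation equation
    rw [Finset.sum_singleton, one_smul]
  · -- degree
    rw [degOf, Finset.sum_singleton]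
end
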